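/- arXiv:math/0604215 — 5 statements merged into one kernel-verified Lean document; each statement's English description precedes it below -/
import Mathlib

section
/- Let B and D be nonnegative random variables (possibly taking the value infinity) with E[min{B,D}] < ∞, and let λ > 0 with λE[B·1_{D=∞}] < 1 and λE[B] > 1. Then the equation z = λE[min{zB, D}] has a unique solution z in (0,∞). -/
open MeasureTheory ENNReal

private lemma ennreal_mul_min (a b c : ℝ≥0∞) : a * min b c = min (a * b) (a * c) := by
  rcases le_total b c with h | h
  · rw [min_eq_left h, min_eq_left (mul_le_mul_right h a)]
  · rw [min_eq_right h, min_eq_right (mul_le_mul_right h a)]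

private lemma ennreal_iInf_min_const (b : ℝ≥0∞) (f : ℕ → ℝ≥0∞) :
    (⨅ n, min b (f n)) = min b (⨅ n, f n) := by
  refine le_antisymm (le_min (iInf_le_of_le 0 (min_le_left _ _))
    (le_iInf fun n => iInf_le_of_le n (min_le_right _ _)))
    (le_iInf fun n => min_le_min le_rfl (iInf_le _ n))

private lemma ennreal_iSup_min_const (b : ℝ≥0∞) (f : ℕ → ℝ≥0∞) :
    (⨆ n, min b (f n)) = min b (⨆ n, f n) := by
  simpa [inf_comm] using (inf_iSup_eq b f).symm

private lemma ennreal_iInf_inv_nat : ⨅ n : ℕ, ((n : ℝ≥0∞) + 1)⁻¹ = 0 := by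
  rw [← ENNReal.inv_iSup]
  have : ⨆ n : ℕ, ((n : ℝ≥0∞) + 1) = ⊤ := by
    refine le_antisymm le_top ?_
    rw [← ENNReal.iSup_natCast]
    exact iSup_mono fun n => le_self_add
  rw [this, ENNReal.inv_top]

/-- The fixed point equation `z = λ E[min{z B, D}]` has a unique solution in `(0, ∞)`
provided `λ E[B 1_{D=∞}] < 1 < λ E[B]` and `E[min{B,D}] < ∞`. -/
theorem fixed_point_equation_unique_solution
    {Ω : Type*} [MeasurableSpace Ω] (μ : Measure Ω) [IsProbabilityMeasure μ]
    (B D : Ω → ℝ≥0∞) (hB : Measurable B) (hD : Measurable D)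
    (hpos : ∀ᵐ ω ∂μ, 0 < B ω ∧ 0 < D ω ∧ (B ω ≠ ⊤ ∨ D ω ≠ ⊤))
    (l : ℝ≥0∞) (hl0 : 0 < l) (hltop : l ≠ ⊤)
    (hmin : ∫⁻ ω, min (B ω) (D ω) ∂μ ≠ ⊤)
    (hsub : l * ∫⁻ ω in {ω | D ω = ⊤}, B ω ∂μ < 1)
    (hsup : 1 < l * ∫⁻ ω, B ω ∂μ) :
    ∃! z : ℝ≥0∞, (0 < z ∧ z < ⊤) ∧ z = l * ∫⁻ ω, min (z * B ω) (D ω) ∂μ := by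
  classical
  set H : ℝ≥0∞ → ℝ≥0∞ := fun u => ∫⁻ ω, min (B ω) (u * D ω) ∂μ with hHdef
  have Hmeas : ∀ u : ℝ≥0∞, Measurable fun ω => min (B ω) (u * D ω) :=
    fun u => hB.min (hD.const_mul u)
  have Hmono : Monotone H := fun u v huv =>
    lintegral_mono fun ω => min_le_min le_rfl (mul_le_mul_left huv _)
  have Hfin : ∀ u : ℝ≥0∞, u ≠ ⊤ → H u ≠ ⊤ := by
    intro u hu
    have hle : ∀ ω, min (B ω) (u * D ω) ≤ (1 + u) * min (B ω) (D ω) := by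
      intro ω
      rw [ennreal_mul_min]
      exact min_le_min (le_mul_of_one_le_left' le_self_add)
        (mul_le_mul_left le_add_self _)
    have h2 : H u ≤ (1 + u) * ∫⁻ ω, min (B ω) (D ω) ∂μ := by
      calc H u ≤ ∫⁻ ω, (1 + u) * min (B ω) (D ω) ∂μ := lintegral_mono hle
        _ = (1 + u) * ∫⁻ ω, min (B ω) (D ω) ∂μ := lintegral_const_mul _ (hB.min hD)
    exact ne_top_of_le_ne_top (mul_ne_top (ENNReal.add_ne_top.2 ⟨one_ne_top, hu⟩) hmin) h2
  -- key identity relating the two parametrizations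
  have key : ∀ z : ℝ≥0∞, z ≠ 0 → z ≠ ⊤ →
      ∫⁻ ω, min (z * B ω) (D ω) ∂μ = z * H z⁻¹ := by
    intro z hz0 hzt
    have hfun : (fun ω => min (z * B ω) (D ω)) = fun ω => z * min (B ω) (z⁻¹ * D ω) := by
      funext ω
      rw [ennreal_mul_min, ← mul_assoc, ENNReal.mul_inv_cancel hz0 hzt, one_mul]
    rw [hfun, lintegral_const_mul z (Hmeas z⁻¹)]
  -- every solution of the fixed point equation gives l * H z⁻¹ = 1
  have sol_eq : ∀ z : ℝ≥0∞, (0 < z ∧ z < ⊤) ∧ z = l * ∫⁻ ω, min (z * B ω) (D ω) ∂μ →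
      l * H z⁻¹ = 1 := by
    rintro z ⟨⟨hz0, hzt⟩, hz⟩
    have h1 : z * (l * H z⁻¹) = z * 1 := by
      rw [mul_one, ← mul_left_comm, ← key z hz0.ne' hzt.ne]
      exact hz.symm
    exact (ENNReal.mul_right_strictMono hz0.ne' hzt.ne).injective h1
  -- two solutions cannot be distinct
  have no_two : ∀ z₁ z₂ : ℝ≥0∞,
      ((0 < z₁ ∧ z₁ < ⊤) ∧ z₁ = l * ∫⁻ ω, min (z₁ * B ω) (D ω) ∂μ) →
      ((0 < z₂ ∧ z₂ < ⊤) ∧ z₂ = l * ∫⁻ ω, min (z₂ * B ω) (D ω) ∂μ) →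
      z₁ < z₂ → False := by
    rintro z₁ z₂ h₁ h₂ hlt
    have hz₁0 := h₁.1.1
    have hz₂0 := h₂.1.1
    have hz₂t := h₂.1.2
    have hz₂eq := h₂.2
    have hz₁t := h₁.1.2
    have hu21 : z₂⁻¹ < z₁⁻¹ := ENNReal.inv_lt_inv.2 hlt
    have hu₂top : z₂⁻¹ ≠ ⊤ := ENNReal.inv_ne_top.2 hz₂0.ne'
    have hu₁top : z₁⁻¹ ≠ ⊤ := ENNReal.inv_ne_top.2 hz₁0.ne'
    have hH12 : H z₂⁻¹ = H z₁⁻¹ := by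
      have e1 := sol_eq z₁ h₁
      have e2 := sol_eq z₂ h₂
      exact (ENNReal.mul_right_strictMono hl0.ne' hltop).injective (e2.trans e1.symm)
    have hae : (fun ω => min (B ω) (z₂⁻¹ * D ω)) =ᵐ[μ] fun ω => min (B ω) (z₁⁻¹ * D ω) := by
      refine ae_eq_of_ae_le_of_lintegral_le
        (Filter.Eventually.of_forall fun ω => min_le_min le_rfl (mul_le_mul_left hu21.le _))
        (Hfin _ hu₂top) (Hmeas z₁⁻¹).aemeasurable (le_of_eq hH12.symm)
    have haemin : (fun ω => min (z₂ * B ω) (D ω)) =ᵐ[μ] fun ω => z₂ * B ω := by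
      filter_upwards [hae, hpos] with ω hmineq hp
      obtain ⟨hB0, hD0, -⟩ := hp
      rcases eq_or_ne (D ω) ⊤ with hDt | hDt
      · rw [hDt]; exact min_eq_left le_top
      · have hble : B ω ≤ z₂⁻¹ * D ω := by
          by_contra hbd
          push_neg at hbd
          have hUlt : z₂⁻¹ * D ω < z₁⁻¹ * D ω :=
            ENNReal.mul_lt_mul_left hD0.ne' hDt hu21
          have : z₂⁻¹ * D ω = min (B ω) (z₁⁻¹ * D ω) := by
            rw [← hmineq, min_eq_right hbd.le]
          exact (lt_min hbd hUlt).ne' this.symm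
        have : z₂ * B ω ≤ D ω := by
          calc z₂ * B ω ≤ z₂ * (z₂⁻¹ * D ω) := mul_le_mul_right hble _
            _ = D ω := by rw [← mul_assoc, ENNReal.mul_inv_cancel hz₂0.ne' hz₂t.ne, one_mul]
        exact min_eq_left this
    have hz₂B : z₂ = z₂ * (l * ∫⁻ ω, B ω ∂μ) := by
      calc z₂ = l * ∫⁻ ω, min (z₂ * B ω) (D ω) ∂μ := hz₂eq
        _ = l * ∫⁻ ω, z₂ * B ω ∂μ := by rw [lintegral_congr_ae haemin]
        _ = l * (z₂ * ∫⁻ ω, B ω ∂μ) := by rw [lintegral_const_mul z₂ hB]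
        _ = z₂ * (l * ∫⁻ ω, B ω ∂μ) := by ring
    have : (1 : ℝ≥0∞) = l * ∫⁻ ω, B ω ∂μ :=
      (ENNReal.mul_right_strictMono hz₂0.ne' hz₂t.ne).injective (by rw [mul_one]; exact hz₂B)
    exact hsup.ne' this.symm
  -- small u with l * H u < 1
  have hSmall : ∃ n : ℕ, l * H ((n : ℝ≥0∞) + 1)⁻¹ < 1 := by
    have hanti : Antitone fun (n : ℕ) (ω : Ω) => min (B ω) (((n : ℝ≥0∞) + 1)⁻¹ * D ω) := by
      intro m n hmn
      refine fun ω => min_le_min le_rfl (mul_le_mul_left ?_ _)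
      exact ENNReal.inv_le_inv.2 (add_le_add_left (by exact_mod_cast hmn) 1)
    have h0fin : ∫⁻ ω, min (B ω) (((0 : ℝ≥0∞) + 1)⁻¹ * D ω) ∂μ ≠ ⊤ := by
      simpa using hmin
    have hiInf := lintegral_iInf (fun n => Hmeas _) hanti (by simpa using h0fin)
    have hpt : ∀ ω, (⨅ n : ℕ, min (B ω) (((n : ℝ≥0∞) + 1)⁻¹ * D ω))
        = {ω' | D ω' = ⊤}.indicator B ω := by
      intro ω
      rcases eq_or_ne (D ω) ⊤ with hDt | hDt
      · have hc : ∀ n : ℕ, ((n : ℝ≥0∞) + 1)⁻¹ * D ω = ⊤ := fun n => by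
          rw [hDt, ENNReal.mul_top (by simp)]
        simp [hc, Set.indicator_of_mem, hDt, Set.mem_setOf_eq]
      · have h1 : (⨅ n : ℕ, ((n : ℝ≥0∞) + 1)⁻¹ * D ω) = 0 := by
          rw [← ENNReal.iInf_mul (fun h => absurd h hDt), ennreal_iInf_inv_nat, zero_mul]
        rw [ennreal_iInf_min_const, h1]
        simp [Set.indicator_of_notMem, hDt, Set.mem_setOf_eq]
    have hint : (⨅ n : ℕ, H ((n : ℝ≥0∞) + 1)⁻¹) = ∫⁻ ω in {ω | D ω = ⊤}, B ω ∂μ := by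
      rw [hHdef, ← hiInf]
      have : MeasurableSet {ω | D ω = ⊤} := hD (measurableSet_singleton ⊤)
      rw [← lintegral_indicator this]
      exact lintegral_congr fun ω => hpt ω
    have : (⨅ n : ℕ, l * H ((n : ℝ≥0∞) + 1)⁻¹) < 1 := by
      rw [← ENNReal.mul_iInf (fun h => absurd h hltop), hint]
      exact hsub
    exact iInf_lt_iff.1 this
  -- large u with 1 < l * H u
  have hLarge : ∃ n : ℕ, 1 < l * H (n : ℝ≥0∞) := by
    have hmono : Monotone fun (n : ℕ) (ω : Ω) => min (B ω) ((n : ℝ≥0∞) * D ω) := by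
      intro m n hmn
      exact fun ω => min_le_min le_rfl (mul_le_mul_left (by exact_mod_cast hmn) _)
    have hiSup := lintegral_iSup (μ := μ) (fun n => Hmeas _) hmono
    have hpt : ∀ᵐ ω ∂μ, (⨆ n : ℕ, min (B ω) ((n : ℝ≥0∞) * D ω)) = B ω := by
      filter_upwards [hpos] with ω hp
      obtain ⟨-, hD0, -⟩ := hp
      have hsupD : (⨆ n : ℕ, (n : ℝ≥0∞) * D ω) = ⊤ := by
        rw [← ENNReal.iSup_mul, ENNReal.iSup_natCast, ENNReal.top_mul hD0.ne']
      rw [ennreal_iSup_min_const, hsupD, min_eq_left le_top]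
    have hint : (⨆ n : ℕ, H (n : ℝ≥0∞)) = ∫⁻ ω, B ω ∂μ := by
      rw [hHdef, ← hiSup]
      exact lintegral_congr_ae hpt
    have : 1 < ⨆ n : ℕ, l * H (n : ℝ≥0∞) := by
      rw [← ENNReal.mul_iSup, hint]
      exact hsup
    exact lt_iSup_iff.1 this
  obtain ⟨n₀, hn₀⟩ := hSmall
  obtain ⟨n₁, hn₁⟩ := hLarge
  -- the candidate
  set S : Set ℝ≥0∞ := {u | l * H u ≤ 1} with hSdef
  set u₀ : ℝ≥0∞ := sSup S with hu₀def
  have hu₀pos : 0 < u₀ := lt_of_lt_of_le (by simp) (le_sSup (show ((n₀ : ℝ≥0∞) + 1)⁻¹ ∈ S from hn₀.le))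
  have hu₀top : u₀ < ⊤ := by
    refine lt_of_le_of_lt (sSup_le fun u hu => ?_) (ENNReal.natCast_lt_top (n₁ + 1))
    by_contra hc
    push_neg at hc
    have : l * H (n₁ : ℝ≥0∞) ≤ 1 := le_trans (mul_le_mul_right (Hmono (le_trans (by exact_mod_cast Nat.le_succ n₁) hc.le)) l) hu
    exact absurd this (not_le.2 hn₁)
  -- l * H u₀ ≤ 1
  have hle1 : l * H u₀ ≤ 1 := by
    have hv : ∀ v, v < u₀ → l * H v ≤ 1 := by
      intro v hvlt
      obtain ⟨u, huS, hvu⟩ := lt_sSup_iff.1 hvlt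
      exact le_trans (mul_le_mul_right (Hmono hvu.le) l) huS
    set v : ℕ → ℝ≥0∞ := fun n => u₀ * (1 - ((n : ℝ≥0∞) + 1)⁻¹) with hvdef
    have hvlt : ∀ n, v n < u₀ := by
      intro n
      have : (1 : ℝ≥0∞) - ((n : ℝ≥0∞) + 1)⁻¹ < 1 :=
        ENNReal.sub_lt_self one_ne_top one_ne_zero (by simp)
      calc v n < u₀ * 1 := ENNReal.mul_lt_mul_right hu₀pos.ne' hu₀top.ne this
        _ = u₀ := mul_one u₀
    have hvmono : Monotone v := by
      intro m n hmn
      refine mul_le_mul_right (tsub_le_tsub_left ?_ 1) u₀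
      exact ENNReal.inv_le_inv.2 (add_le_add_left (by exact_mod_cast hmn) 1)
    have hvsup : (⨆ n, v n) = u₀ := by
      rw [hvdef, ← ENNReal.mul_iSup, ← ENNReal.sub_iInf, ennreal_iInf_inv_nat, tsub_zero, mul_one]
    have hmono' : Monotone fun (n : ℕ) (ω : Ω) => min (B ω) (v n * D ω) :=
      fun m n hmn ω => min_le_min le_rfl (mul_le_mul_left (hvmono hmn) _)
    have hiSup := lintegral_iSup (μ := μ) (fun n => Hmeas _) hmono'
    have hpt : ∀ ω, (⨆ n : ℕ, min (B ω) (v n * D ω)) = min (B ω) (u₀ * D ω) := by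
      intro ω
      rw [ennreal_iSup_min_const, ← ENNReal.iSup_mul, hvsup]
    have : H u₀ = ⨆ n, H (v n) := by
      rw [hHdef, ← hiSup]
      exact (lintegral_congr fun ω => (hpt ω).symm)
    rw [this, ENNReal.mul_iSup]
    exact iSup_le fun n => hv (v n) (hvlt n)
  -- 1 ≤ l * H u₀
  have hge1 : 1 ≤ l * H u₀ := by
    have hu : ∀ u, u₀ < u → 1 < l * H u := by
      intro u hu
      by_contra hc
      push_neg at hc
      exact absurd (le_sSup (show u ∈ S from hc)) (not_le.2 hu)
    set v : ℕ → ℝ≥0∞ := fun n => u₀ * (1 + ((n : ℝ≥0∞) + 1)⁻¹) with hvdef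
    have hvgt : ∀ n, u₀ < v n := by
      intro n
      have : (1 : ℝ≥0∞) < 1 + ((n : ℝ≥0∞) + 1)⁻¹ :=
        ENNReal.lt_add_right one_ne_top (by simp)
      calc u₀ = u₀ * 1 := (mul_one u₀).symm
        _ < v n := ENNReal.mul_lt_mul_right hu₀pos.ne' hu₀top.ne this
    have hvanti : Antitone v := by
      intro m n hmn
      refine mul_le_mul_right (add_le_add_right ?_ 1) u₀
      exact ENNReal.inv_le_inv.2 (add_le_add_left (by exact_mod_cast hmn) 1)
    have hvtop : ∀ n, v n ≠ ⊤ := fun n =>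
      mul_ne_top hu₀top.ne (by simp [ENNReal.add_ne_top])
    have hvinf : (⨅ n, v n) = u₀ := by
      rw [hvdef, ← ENNReal.mul_iInf_of_ne hu₀pos.ne' hu₀top.ne, ← ENNReal.add_iInf,
        ennreal_iInf_inv_nat, add_zero, mul_one]
    have hanti' : Antitone fun (n : ℕ) (ω : Ω) => min (B ω) (v n * D ω) :=
      fun m n hmn ω => min_le_min le_rfl (mul_le_mul_left (hvanti hmn) _)
    have h0fin : ∫⁻ ω, min (B ω) (v 0 * D ω) ∂μ ≠ ⊤ := Hfin (v 0) (hvtop 0)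
    have hiInf := lintegral_iInf (fun n => Hmeas _) hanti' h0fin
    have hpt : ∀ ω, (⨅ n : ℕ, min (B ω) (v n * D ω)) = min (B ω) (u₀ * D ω) := by
      intro ω
      rw [ennreal_iInf_min_const]
      congr 1
      rcases eq_or_ne (D ω) ⊤ with hDt | hDt
      · have hc : ∀ n : ℕ, v n * D ω = ⊤ := fun n => by
          rw [hDt, ENNReal.mul_top (hu₀pos.trans (hvgt n)).ne']
        rw [show u₀ * D ω = ⊤ from by rw [hDt, ENNReal.mul_top hu₀pos.ne'], iInf_eq_top]
        exact hc
      · rw [← ENNReal.iInf_mul (fun h => absurd h hDt), hvinf]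
    have : H u₀ = ⨅ n, H (v n) := by
      rw [hHdef, ← hiInf]
      exact (lintegral_congr fun ω => (hpt ω).symm)
    rw [this, ENNReal.mul_iInf (fun h => absurd h hltop)]
    exact le_iInf fun n => (hu (v n) (hvgt n)).le
  have heq1 : l * H u₀ = 1 := le_antisymm hle1 hge1
  -- the solution
  refine ⟨u₀⁻¹, ⟨⟨ENNReal.inv_pos.2 hu₀top.ne, ENNReal.inv_lt_top.2 hu₀pos⟩, ?_⟩, ?_⟩
  · rw [key u₀⁻¹ (ENNReal.inv_ne_zero.2 hu₀top.ne) (ENNReal.inv_ne_top.2 hu₀pos.ne'),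
      inv_inv, mul_left_comm, heq1, mul_one]
  · intro y hy
    have hx : (0 < u₀⁻¹ ∧ u₀⁻¹ < ⊤) ∧ u₀⁻¹ = l * ∫⁻ ω, min (u₀⁻¹ * B ω) (D ω) ∂μ := by
      refine ⟨⟨ENNReal.inv_pos.2 hu₀top.ne, ENNReal.inv_lt_top.2 hu₀pos⟩, ?_⟩
      rw [key u₀⁻¹ (ENNReal.inv_ne_zero.2 hu₀top.ne) (ENNReal.inv_ne_top.2 hu₀pos.ne'),
        inv_inv, mul_left_comm, heq1, mul_one]
    rcases lt_trichotomy y u₀⁻¹ with h | h | h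
    · exact absurd (no_two y u₀⁻¹ hy hx h) not_false
    · exact h
    · exact absurd (no_two u₀⁻¹ y hx hy h) not_false
end

section
/- Suppose (B,D) are independent, P(D ≥ t) = e^{−νt}, and z∞ > 0 satisfies ρβ*(z∞ν) = 1 where β*(s) = E[e^{−sB*}] and B* has density P(B ≥ x)/E[B]. Then the function z(t) = z∞(1 − e^{−νt}) satisfies z(t) = λ∫₀ᵗ P(D ≥ t−s)·P(B ≥ ∫ₛᵗ (1/z(u))du) ds for all t ≥ 0. -/
open MeasureTheory ENNReal

/-- Exponential reneging: if `D` is exponential with rate `ν`, independent of `B`,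
and `z∞` satisfies `ρ β*(z∞ ν) = 1`, then `z(t) = z∞(1 - e^{-νt})` satisfies the
fluid model equation `z(t) = λ ∫₀ᵗ P(D ≥ t-s) P(B ≥ ∫ₛᵗ du/z(u)) ds`. -/
theorem exponential_reneging_fluid_solution
    {Ω : Type*} [MeasurableSpace Ω] (μ : Measure Ω) [IsProbabilityMeasure μ]
    (B : Ω → ℝ≥0∞) (D : Ω → ℝ) (hB : Measurable B) (hD : Measurable D)
    (hindep : ProbabilityTheory.IndepFun B D μ)
    (hBfin : ∫⁻ ω, B ω ∂μ ≠ ⊤)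
    (ν zoo : ℝ) (hν : 0 < ν) (hzoo : 0 < zoo)
    (l : ℝ≥0∞) (hl0 : 0 < l) (hltop : l ≠ ⊤)
    (hDexp : ∀ t : ℝ, 0 ≤ t → μ {ω | t ≤ D ω} = ENNReal.ofReal (Real.exp (-ν * t)))
    (hfp : l * ∫⁻ x in Set.Ioi (0 : ℝ),
        ENNReal.ofReal (Real.exp (-(zoo * ν) * x)) * μ {ω | ENNReal.ofReal x ≤ B ω} = 1) :
    ∀ t : ℝ, 0 ≤ t →
      ENNReal.ofReal (zoo * (1 - Real.exp (-ν * t))) =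
        l * ∫⁻ s in Set.Ioc (0 : ℝ) t,
          μ {ω | t - s ≤ D ω} *
            μ {ω | (∫⁻ u in Set.Ioc s t,
                ENNReal.ofReal ((zoo * (1 - Real.exp (-ν * u)))⁻¹)) ≤ B ω} := by
  intro t ht
  rcases eq_or_lt_of_le ht with rfl | ht
  · simp
  -- basic positivity facts
  have hE : ∀ u : ℝ, 0 < u → 0 < Real.exp (ν * u) - 1 := by
    intro u hu
    have h := Real.add_one_le_exp (ν * u)
    have : (0:ℝ) < ν * u := by positivity
    linarith
  have hzpos : ∀ u : ℝ, 0 < u → 0 < zoo * (1 - Real.exp (-ν * u)) := by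
    intro u hu
    have hE' := hE u hu
    have he : Real.exp (-ν * u) * Real.exp (ν * u) = 1 := by
      rw [← Real.exp_add]; ring_nf; exact Real.exp_zero
    have hpos := Real.exp_pos (-ν * u)
    nlinarith [Real.exp_pos (ν * u)]
  set c : ℝ := zoo * (1 - Real.exp (-ν * t)) with hc
  have hcpos : 0 < c := hzpos t ht
  set F : ℝ → ℝ := fun u => (zoo * ν)⁻¹ * Real.log (Real.exp (ν * u) - 1) with hFdef
  set φ : ℝ → ℝ := fun s => F t - F s with hφdef
  -- derivative of F
  have hder : ∀ u : ℝ, 0 < u →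
      HasDerivAt F ((zoo * (1 - Real.exp (-ν * u)))⁻¹) u := by
    intro u hu
    have hEu := hE u hu
    have h1 : HasDerivAt (fun x : ℝ => Real.exp (ν * x) - 1) (Real.exp (ν * u) * ν) u := by
      simpa using ((Real.hasDerivAt_exp (ν * u)).comp u
        ((hasDerivAt_id u).const_mul ν)).sub_const 1
    have h2 := ((Real.hasDerivAt_log (ne_of_gt hEu)).comp u h1).const_mul ((zoo * ν)⁻¹)
    refine h2.congr_deriv ?_
    rw [neg_mul, Real.exp_neg]
    have he : Real.exp (ν * u) ≠ 0 := (Real.exp_pos _).ne'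
    field_simp
  -- the inner integral
  have hinner : ∀ s : ℝ, 0 < s → s ≤ t →
      (∫⁻ u in Set.Ioc s t, ENNReal.ofReal ((zoo * (1 - Real.exp (-ν * u)))⁻¹))
        = ENNReal.ofReal (φ s) := by
    intro s hs hst
    have hcont : ContinuousOn (fun u => (zoo * (1 - Real.exp (-ν * u)))⁻¹) (Set.Icc s t) := by
      apply ContinuousOn.inv₀
      · fun_prop
      · intro u hu; exact ne_of_gt (hzpos u (lt_of_lt_of_le hs hu.1))
    have hint : IntegrableOn (fun u => (zoo * (1 - Real.exp (-ν * u)))⁻¹) (Set.Ioc s t) :=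
      (hcont.integrableOn_Icc).mono_set Set.Ioc_subset_Icc_self
    rw [← ofReal_integral_eq_lintegral_ofReal hint
      (ae_restrict_of_forall_mem measurableSet_Ioc
        (fun u hu => le_of_lt (inv_pos.mpr (hzpos u (lt_trans hs hu.1)))))]
    congr 1
    rw [← intervalIntegral.integral_of_le hst]
    have huIcc : Set.uIcc s t = Set.Icc s t := Set.uIcc_of_le hst
    rw [intervalIntegral.integral_eq_sub_of_hasDerivAt
      (f := F) (fun u hu => hder u (lt_of_lt_of_le hs (huIcc ▸ hu).1))
      ((hcont.mono (huIcc ▸ le_refl _ : Set.uIcc s t ⊆ Set.Icc s t)).intervalIntegrable)]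
  -- monotonicity of F
  have hFlt : ∀ ⦃a b : ℝ⦄, 0 < a → a < b → F a < F b := by
    intro a b ha hab
    have h1 : Real.log (Real.exp (ν * a) - 1) < Real.log (Real.exp (ν * b) - 1) := by
      apply Real.log_lt_log (hE a ha)
      have : Real.exp (ν * a) < Real.exp (ν * b) := Real.exp_lt_exp.mpr (by nlinarith)
      linarith
    have hpos : (0:ℝ) < (zoo * ν)⁻¹ := by positivity
    exact mul_lt_mul_of_pos_left h1 hpos
  have hφpos : ∀ s ∈ Set.Ioo (0:ℝ) t, 0 < φ s := by
    intro s hs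
    have := hFlt hs.1 hs.2
    simp only [hφdef]; linarith
  have hinj : Set.InjOn φ (Set.Ioo (0:ℝ) t) := by
    intro a ha b hb hab
    by_contra hne
    rcases lt_or_gt_of_ne hne with h | h
    · have := hFlt ha.1 h; simp only [hφdef] at hab; linarith
    · have := hFlt hb.1 h; simp only [hφdef] at hab; linarith
  -- image of Ioo 0 t under φ is Ioi 0
  have himg : φ '' Set.Ioo (0:ℝ) t = Set.Ioi (0:ℝ) := by
    apply Set.eq_of_subset_of_subset
    · rintro y ⟨s, hs, rfl⟩; exact hφpos s hs
    · intro y hy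
      have hy0 : (0:ℝ) < y := hy
      set A : ℝ := 1 + (Real.exp (ν * t) - 1) * Real.exp (-(zoo * ν) * y) with hA
      have hApos : (0:ℝ) < A := by
        have := hE t ht; have := Real.exp_pos (-(zoo * ν) * y); nlinarith
      have hA1 : (1:ℝ) < A := by
        have := hE t ht; have := Real.exp_pos (-(zoo * ν) * y); nlinarith
      have hAlt : A < Real.exp (ν * t) := by
        have h1 : Real.exp (-(zoo * ν) * y) < 1 := by
          rw [Real.exp_lt_one_iff]
          nlinarith [mul_pos (mul_pos hzoo hν) hy0]
        have := hE t ht; nlinarith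
      set s : ℝ := ν⁻¹ * Real.log A with hsdef
      have hlogA : 0 < Real.log A := Real.log_pos hA1
      have hs0 : 0 < s := by positivity
      have hst : s < t := by
        have h1 : Real.log A < ν * t := by
          have := Real.log_lt_log hApos hAlt
          rwa [Real.log_exp] at this
        calc s = ν⁻¹ * Real.log A := rfl
        _ < ν⁻¹ * (ν * t) := by
            have hpos : (0:ℝ) < ν⁻¹ := by positivity
            exact mul_lt_mul_of_pos_left h1 hpos
        _ = t := by field_simp
      refine ⟨s, ⟨hs0, hst⟩, ?_⟩
      have hexps : Real.exp (ν * s) = A := by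
        rw [hsdef, ← mul_assoc, mul_inv_cancel₀ (ne_of_gt hν), one_mul, Real.exp_log hApos]
      have hFs : F s = F t - y := by
        rw [hFdef]
        simp only
        rw [hexps]
        have : A - 1 = (Real.exp (ν * t) - 1) * Real.exp (-(zoo * ν) * y) := by rw [hA]; ring
        rw [this, Real.log_mul (ne_of_gt (hE t ht)) (Real.exp_pos _).ne', Real.log_exp]
        have hzν : zoo * ν ≠ 0 := by positivity
        field_simp
        ring
      simp only [hφdef, hFs]; ring
  -- fderiv for the substitution
  have hfd : ∀ s ∈ Set.Ioo (0:ℝ) t,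
      HasFDerivWithinAt φ
        ((1 : ℝ →L[ℝ] ℝ).smulRight (-(zoo * (1 - Real.exp (-ν * s)))⁻¹))
        (Set.Ioo (0:ℝ) t) s := by
    intro s hs
    exact (((hder s hs.1).const_sub (F t)).hasDerivWithinAt).hasFDerivWithinAt
  -- the substitution
  set g : ℝ → ℝ≥0∞ := fun x =>
    ENNReal.ofReal (Real.exp (-(zoo * ν) * x)) * μ {ω | ENNReal.ofReal x ≤ B ω} with hg
  have key := lintegral_image_eq_lintegral_abs_det_fderiv_mul volume
    measurableSet_Ioo hfd hinj g
  rw [himg] at key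
  simp only [ContinuousLinearMap.det_smulRight, ContinuousLinearMap.one_apply, one_mul] at key
  -- pointwise identity on Ioo 0 t
  have hpt : ∀ s ∈ Set.Ioo (0:ℝ) t,
      ENNReal.ofReal c *
        (ENNReal.ofReal |(-(zoo * (1 - Real.exp (-ν * s)))⁻¹)| * g (φ s))
      = ENNReal.ofReal (Real.exp (-ν * (t - s))) * μ {ω | ENNReal.ofReal (φ s) ≤ B ω} := by
    intro s hs
    have hzs := hzpos s hs.1
    rw [hg]
    simp only
    rw [← mul_assoc, ← mul_assoc, ← ENNReal.ofReal_mul (le_of_lt hcpos),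
      ← ENNReal.ofReal_mul (by positivity)]
    congr 2
    have hEs := hE s hs.1
    have hEt := hE t ht
    have hexpφ : Real.exp (-(zoo * ν) * φ s)
        = (Real.exp (ν * s) - 1) / (Real.exp (ν * t) - 1) := by
      have hzν : zoo * ν ≠ 0 := by positivity
      have : -(zoo * ν) * φ s
          = Real.log (Real.exp (ν * s) - 1) - Real.log (Real.exp (ν * t) - 1) := by
        simp only [hφdef, hFdef]
        field_simp
        ring
      rw [this, Real.exp_sub, Real.exp_log hEs, Real.exp_log hEt]
    rw [hexpφ, abs_neg, abs_inv, abs_of_pos hzs, hc]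
    have h3 : Real.exp (-ν * (t - s)) = (Real.exp (ν * t))⁻¹ * Real.exp (ν * s) := by
      rw [← Real.exp_neg, ← Real.exp_add]; ring_nf
    rw [h3, show -ν * s = -(ν * s) by ring, show -ν * t = -(ν * t) by ring,
        Real.exp_neg, Real.exp_neg]
    have ha : Real.exp (ν * s) ≠ 0 := (Real.exp_pos _).ne'
    have hb : Real.exp (ν * t) ≠ 0 := (Real.exp_pos _).ne'
    have ha1 : Real.exp (ν * s) - 1 ≠ 0 := ne_of_gt hEs
    have hb1 : Real.exp (ν * t) - 1 ≠ 0 := ne_of_gt hEt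
    have hz : zoo ≠ 0 := ne_of_gt hzoo
    field_simp
  -- assemble
  have step1 : (∫⁻ s in Set.Ioc (0:ℝ) t,
      μ {ω | t - s ≤ D ω} *
        μ {ω | (∫⁻ u in Set.Ioc s t,
            ENNReal.ofReal ((zoo * (1 - Real.exp (-ν * u)))⁻¹)) ≤ B ω})
      = ∫⁻ s in Set.Ioo (0:ℝ) t,
          ENNReal.ofReal (Real.exp (-ν * (t - s))) * μ {ω | ENNReal.ofReal (φ s) ≤ B ω} := by
    rw [← setLIntegral_congr (Ioo_ae_eq_Ioc (a := (0:ℝ)) (b := t))]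
    apply setLIntegral_congr_fun measurableSet_Ioo
    intro s hs
    beta_reduce
    rw [hDexp (t - s) (by linarith [hs.2]), hinner s hs.1 (le_of_lt hs.2)]
  have step2 : ENNReal.ofReal c * ∫⁻ x in Set.Ioi (0:ℝ), g x
      = ∫⁻ s in Set.Ioo (0:ℝ) t,
          ENNReal.ofReal (Real.exp (-ν * (t - s))) * μ {ω | ENNReal.ofReal (φ s) ≤ B ω} := by
    rw [key, ← lintegral_const_mul' _ _ ENNReal.ofReal_ne_top]
    apply setLIntegral_congr_fun measurableSet_Ioo
    exact hpt
  rw [step1, ← step2, ← mul_assoc, mul_comm l (ENNReal.ofReal c), mul_assoc, hfp, mul_one]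
end

section
/- Under the assumptions λE[B·1_{D=∞}] < 1 and E[min{B,D}] < ∞, any fluid model solution z(·) is bounded: sup_{t≥0} z(t) < ∞. -/
open MeasureTheory ENNReal Set Filter Topology

/-- Layer-cake type bound: `∫_{(0,t]} μ{ofReal u < X} du ≤ E[X]`. -/
lemma fluid_layercake_bound {Ω : Type*} [MeasurableSpace Ω] (μ : Measure Ω)
    [IsProbabilityMeasure μ] (X : Ω → ℝ≥0∞) (hX : Measurable X) (t : ℝ) :
    ∫⁻ u in Set.Ioc (0:ℝ) t, μ {ω | ENNReal.ofReal u < X ω} ≤ ∫⁻ ω, X ω ∂μ := by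
  set T : Set (ℝ × Ω) := {p | ENNReal.ofReal p.1 < X p.2} with hT
  have hTm : MeasurableSet T :=
    measurableSet_lt (ENNReal.measurable_ofReal.comp measurable_fst) (hX.comp measurable_snd)
  have h1 : ∀ u : ℝ, μ {ω | ENNReal.ofReal u < X ω} = ∫⁻ ω, T.indicator 1 (u, ω) ∂μ := by
    intro u
    have hsm : MeasurableSet {ω | ENNReal.ofReal u < X ω} :=
      measurableSet_lt measurable_const hX
    rw [← lintegral_indicator_one hsm]
    refine lintegral_congr fun ω => ?_
    by_cases h : ENNReal.ofReal u < X ω <;> simp [Set.indicator_apply, h, hT]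
  calc ∫⁻ u in Set.Ioc (0:ℝ) t, μ {ω | ENNReal.ofReal u < X ω}
      = ∫⁻ u in Set.Ioc (0:ℝ) t, (∫⁻ ω, T.indicator 1 (u, ω) ∂μ) :=
        lintegral_congr fun u => h1 u
    _ = ∫⁻ ω, (∫⁻ u in Set.Ioc (0:ℝ) t, T.indicator 1 (u, ω)) ∂μ :=
        lintegral_lintegral_swap (by exact (measurable_one.indicator hTm).aemeasurable)
    _ ≤ ∫⁻ ω, X ω ∂μ := by
        apply lintegral_mono
        intro ω
        dsimp only
        have hset : MeasurableSet {u : ℝ | ENNReal.ofReal u < X ω} :=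
          measurableSet_lt ENNReal.measurable_ofReal measurable_const
        have hrw : ∫⁻ u in Set.Ioc (0:ℝ) t, T.indicator 1 (u, ω)
            = volume ({u : ℝ | ENNReal.ofReal u < X ω} ∩ Set.Ioc (0:ℝ) t) := by
          have heq : (fun u : ℝ => T.indicator 1 (u, ω))
              = ({u : ℝ | ENNReal.ofReal u < X ω}).indicator (1 : ℝ → ℝ≥0∞) := by
            ext u
            by_cases h : ENNReal.ofReal u < X ω <;> simp [Set.indicator_apply, h, hT]
          rw [heq, lintegral_indicator_one hset, Measure.restrict_apply hset]
        rw [hrw]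
        by_cases hfin : X ω = ⊤
        · rw [hfin]; exact le_top
        · have hsub : {u : ℝ | ENNReal.ofReal u < X ω} ∩ Set.Ioc (0:ℝ) t
              ⊆ Set.Ioc 0 ((X ω).toReal) := by
            rintro u ⟨hu1, hu2, _⟩
            refine ⟨hu2, ?_⟩
            have := ENNReal.toReal_mono hfin (le_of_lt hu1)
            rwa [ENNReal.toReal_ofReal hu2.le] at this
          calc volume ({u : ℝ | ENNReal.ofReal u < X ω} ∩ Set.Ioc (0:ℝ) t)
              ≤ volume (Set.Ioc 0 ((X ω).toReal)) := measure_mono hsub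
            _ = ENNReal.ofReal ((X ω).toReal) := by rw [Real.volume_Ioc, sub_zero]
            _ = X ω := ENNReal.ofReal_toReal hfin

lemma fluid_min_mul_div (c b d : ℝ≥0∞) (hc0 : c ≠ 0) (hct : c ≠ ⊤) :
    min (c * b) d = c * min b (d / c) := by
  have hd : c * (d / c) = d := ENNReal.mul_div_cancel' (fun h => absurd h hc0) (fun h => absurd h hct)
  rcases le_total b (d / c) with h | h
  · rw [min_eq_left h, min_eq_left (by rw [← hd]; gcongr)]
  · rw [min_eq_right h, hd]
    exact min_eq_right (by rw [← hd]; gcongr)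

/-- Key a priori estimate for a fluid model solution. -/
lemma fluid_key {Ω : Type*} [MeasurableSpace Ω] (μ : Measure Ω) [IsProbabilityMeasure μ]
    (B D B0 D0 : Ω → ℝ≥0∞) (hB : Measurable B) (hD : Measurable D)
    (z : ℝ → ℝ) (z₀ l : ℝ) (hz₀ : 0 ≤ z₀) (hl : 0 < l)
    (hzcont : Continuous z)
    (hinf : ∀ a : ℝ, 0 < a → ∃ c > 0, ∀ t, a < t → c ≤ z t)
    (heq : ∀ t : ℝ, 0 ≤ t →
      z t = z₀ * (μ {ω | (∫⁻ u in Set.Ioc (0 : ℝ) t, ENNReal.ofReal ((z u)⁻¹)) < B0 ω ∧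
                ENNReal.ofReal t < D0 ω}).toReal
          + l * ∫ s in (0 : ℝ)..t,
              (μ {ω | (∫⁻ u in Set.Ioc s t, ENNReal.ofReal ((z u)⁻¹)) < B ω ∧
                ENNReal.ofReal (t - s) < D ω}).toReal)
    (hmin : ∫⁻ ω, min (B ω) (D ω) ∂μ ≠ ⊤)
    (t : ℝ) (ht : 0 ≤ t) (M : ℝ) (hM : 1 ≤ M) (hMz : ∀ u ∈ Set.Icc (0:ℝ) t, z u ≤ M) :
    z t ≤ z₀ + l * (∫⁻ ω, min (ENNReal.ofReal M * B ω) (D ω) ∂μ).toReal := by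
  have hMpos : (0:ℝ) < M := lt_of_lt_of_le one_pos hM
  set X : Ω → ℝ≥0∞ := fun ω => min (ENNReal.ofReal M * B ω) (D ω) with hXdef
  have hXm : Measurable X := (measurable_const.mul hB).min hD
  have hXfin : ∫⁻ ω, X ω ∂μ ≠ ⊤ := by
    have hXle : ∀ ω, X ω ≤ ENNReal.ofReal M * min (B ω) (D ω) := by
      intro ω
      rcases le_total (B ω) (D ω) with h | h
      · rw [min_eq_left h]; exact min_le_left _ _
      · rw [min_eq_right h]
        exact (min_le_right _ _).trans
          (le_mul_of_one_le_left zero_le (ENNReal.one_le_ofReal.mpr hM))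
    have hle2 : ∫⁻ ω, X ω ∂μ ≤ ENNReal.ofReal M * ∫⁻ ω, min (B ω) (D ω) ∂μ := by
      rw [← lintegral_const_mul _ (hB.min hD)]
      exact lintegral_mono hXle
    exact ne_top_of_le_ne_top (ENNReal.mul_ne_top ENNReal.ofReal_ne_top hmin) hle2
  -- positivity of z on (0, ∞)
  have hzpos : ∀ u : ℝ, 0 < u → 0 < z u := by
    intro u hu
    obtain ⟨c, hc, hcz⟩ := hinf (u/2) (by linarith)
    exact lt_of_lt_of_le hc (hcz u (by linarith))
  -- lower bound on S(s,t)
  have hS : ∀ s ∈ Set.Icc (0:ℝ) t,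
      ENNReal.ofReal ((t - s)/M) ≤ ∫⁻ u in Set.Ioc s t, ENNReal.ofReal ((z u)⁻¹) := by
    intro s hs
    have h0 : ENNReal.ofReal ((t - s)/M) = ∫⁻ _ in Set.Ioc s t, ENNReal.ofReal M⁻¹ := by
      rw [setLIntegral_const, Real.volume_Ioc, ← ENNReal.ofReal_mul (by positivity)]
      congr 1
      field_simp
    rw [h0]
    refine setLIntegral_mono (ENNReal.measurable_ofReal.comp (hzcont.measurable.inv)) ?_
    intro u hu
    apply ENNReal.ofReal_le_ofReal
    have hupos : 0 < u := lt_of_le_of_lt hs.1 hu.1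
    have hzu : 0 < z u := hzpos u hupos
    have hzuM : z u ≤ M := hMz u ⟨hupos.le, hu.2⟩
    exact inv_anti₀ hzu hzuM
  -- event inclusion
  have hincl : ∀ s ∈ Set.Icc (0:ℝ) t,
      μ {ω | (∫⁻ u in Set.Ioc s t, ENNReal.ofReal ((z u)⁻¹)) < B ω ∧
        ENNReal.ofReal (t - s) < D ω} ≤ μ {ω | ENNReal.ofReal (t - s) < X ω} := by
    intro s hs
    apply measure_mono
    rintro ω ⟨h1, h2⟩
    refine lt_min ?_ h2
    have h3 : ENNReal.ofReal ((t - s)/M) < B ω := lt_of_le_of_lt (hS s hs) h1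
    have h4 : ENNReal.ofReal (t - s) = ENNReal.ofReal M * ENNReal.ofReal ((t - s)/M) := by
      rw [← ENNReal.ofReal_mul hMpos.le]
      congr 1
      field_simp
    rw [h4]
    exact (ENNReal.mul_lt_mul_iff_right (by simp [hMpos]) ENNReal.ofReal_ne_top).mpr h3
  -- functions
  set f : ℝ → ℝ := fun s => (μ {ω | (∫⁻ u in Set.Ioc s t, ENNReal.ofReal ((z u)⁻¹)) < B ω ∧
      ENNReal.ofReal (t - s) < D ω}).toReal with hfdef
  set F : ℝ → ℝ≥0∞ := fun u => μ {ω | ENNReal.ofReal u < X ω} with hFdef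
  set g : ℝ → ℝ := fun s => (F (t - s)).toReal with hgdef
  have hFanti : Antitone F := by
    intro u v huv
    apply measure_mono
    intro ω hω
    exact lt_of_le_of_lt (ENNReal.ofReal_le_ofReal huv) hω
  have hFm : Measurable F := hFanti.measurable
  have hgm : Measurable g := (hFm.comp (measurable_const.sub measurable_id)).ennreal_toReal
  have hgint : IntervalIntegrable g volume 0 t := by
    rw [intervalIntegrable_iff_integrableOn_Ioc_of_le ht]
    refine Integrable.mono' (integrable_const 1) hgm.aestronglyMeasurable ?_
    filter_upwards with s
    rw [Real.norm_eq_abs, abs_of_nonneg ENNReal.toReal_nonneg]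
    exact ENNReal.toReal_le_of_le_ofReal zero_le_one (by simpa using prob_le_one)
  -- step 1 : ∫ f ≤ ∫ g
  have hstep1 : (∫ s in (0:ℝ)..t, f s) ≤ ∫ s in (0:ℝ)..t, g s := by
    by_cases hfi : IntervalIntegrable f volume 0 t
    · refine intervalIntegral.integral_mono_on ht hfi hgint ?_
      intro s hs
      exact ENNReal.toReal_mono (measure_ne_top μ _) (hincl s hs)
    · rw [intervalIntegral.integral_undef hfi]
      exact intervalIntegral.integral_nonneg ht fun s _ => ENNReal.toReal_nonneg
  -- step 2 : reflect
  have hstep2 : (∫ s in (0:ℝ)..t, g s) = ∫ u in (0:ℝ)..t, (F u).toReal := by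
    have := intervalIntegral.integral_comp_sub_left (fun u => (F u).toReal) t (a := 0) (b := t)
    simpa [sub_self, sub_zero] using this
  -- step 3 : bound by lintegral of X
  have hstep3 : (∫ u in (0:ℝ)..t, (F u).toReal) ≤ (∫⁻ ω, X ω ∂μ).toReal := by
    rw [intervalIntegral.integral_of_le ht]
    rw [MeasureTheory.integral_toReal (hFm.aemeasurable) (by
      filter_upwards with u; exact measure_lt_top μ _)]
    exact ENNReal.toReal_mono hXfin (fluid_layercake_bound μ X hXm t)
  have hI : (∫ s in (0:ℝ)..t, f s) ≤ (∫⁻ ω, X ω ∂μ).toReal :=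
    hstep1.trans ((le_of_eq hstep2).trans hstep3)
  have hterm1 : z₀ * (μ {ω | (∫⁻ u in Set.Ioc (0 : ℝ) t, ENNReal.ofReal ((z u)⁻¹)) < B0 ω ∧
      ENNReal.ofReal t < D0 ω}).toReal ≤ z₀ := by
    refine mul_le_of_le_one_right hz₀ ?_
    exact ENNReal.toReal_le_of_le_ofReal zero_le_one (by simpa using prob_le_one)
  have hterm2 : l * (∫ s in (0:ℝ)..t, f s) ≤ l * (∫⁻ ω, X ω ∂μ).toReal :=
    mul_le_mul_of_nonneg_left hI hl.le
  rw [heq t ht]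
  exact add_le_add hterm1 hterm2

lemma fluid_dct {Ω : Type*} [MeasurableSpace Ω] (μ : Measure Ω)
    (B D : Ω → ℝ≥0∞) (hB : Measurable B) (hD : Measurable D)
    (hmin : ∫⁻ ω, min (B ω) (D ω) ∂μ ≠ ⊤)
    (Ms : ℕ → ℝ) (hM1 : ∀ n, 1 ≤ Ms n) (hMtop : Tendsto Ms atTop atTop) :
    Tendsto (fun n => ∫⁻ ω, min (B ω) (D ω / ENNReal.ofReal (Ms n)) ∂μ) atTop
      (𝓝 (∫⁻ ω in {ω | D ω = ⊤}, B ω ∂μ)) := by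
  have hDset : MeasurableSet {ω | D ω = ⊤} := hD (measurableSet_singleton ⊤)
  rw [← lintegral_indicator hDset]
  apply tendsto_lintegral_of_dominated_convergence (fun ω => min (B ω) (D ω))
  · intro n; exact hB.min (hD.div_const _)
  · intro n
    filter_upwards with ω
    refine min_le_min le_rfl ?_
    calc D ω / ENNReal.ofReal (Ms n) ≤ D ω / 1 :=
          ENNReal.div_le_div_left (ENNReal.one_le_ofReal.mpr (hM1 n)) _
      _ = D ω := by simp
  · exact hmin
  · filter_upwards with ω
    by_cases hDω : D ω = ⊤
    · have heqn : ∀ n, min (B ω) (D ω / ENNReal.ofReal (Ms n)) = B ω := by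
        intro n
        rw [hDω, ENNReal.top_div, if_neg ENNReal.ofReal_ne_top]
        exact min_eq_left le_top
      simp only [heqn]
      rw [Set.indicator_of_mem (show ω ∈ {ω | D ω = ⊤} from hDω) B]
      exact tendsto_const_nhds
    · rw [Set.indicator_of_notMem (show ω ∉ {ω | D ω = ⊤} from hDω) B]
      have h2 : Tendsto (fun n => ENNReal.ofReal (Ms n)) atTop (𝓝 ⊤) :=
        ENNReal.tendsto_ofReal_atTop.comp hMtop
      have h3 : Tendsto (fun n => (ENNReal.ofReal (Ms n))⁻¹) atTop (𝓝 0) := by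
        simpa using ENNReal.tendsto_inv_iff.mpr h2
      have h1 : Tendsto (fun n => D ω / ENNReal.ofReal (Ms n)) atTop (𝓝 0) := by
        simp only [div_eq_mul_inv]
        simpa using ENNReal.Tendsto.const_mul h3 (Or.inr hDω)
      exact tendsto_of_tendsto_of_tendsto_of_le_of_le tendsto_const_nhds h1
        (fun n => zero_le) (fun n => min_le_right _ _)

/-- If `λ E[B 1_{D=∞}] < 1` and `E[min{B,D}] < ∞`, then any fluid model solution
is bounded. -/
theorem fluid_solution_bounded
    {Ω : Type*} [MeasurableSpace Ω] (μ : Measure Ω) [IsProbabilityMeasure μ]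
    (B D B0 D0 : Ω → ℝ≥0∞) (hB : Measurable B) (hD : Measurable D)
    (z : ℝ → ℝ) (z₀ l : ℝ) (hz₀ : 0 ≤ z₀) (hl : 0 < l)
    (hznn : ∀ t, 0 ≤ z t) (hzcont : Continuous z)
    (hinf : ∀ a : ℝ, 0 < a → ∃ c > 0, ∀ t, a < t → c ≤ z t)
    (heq : ∀ t : ℝ, 0 ≤ t →
      z t = z₀ * (μ {ω | (∫⁻ u in Set.Ioc (0 : ℝ) t, ENNReal.ofReal ((z u)⁻¹)) < B0 ω ∧
                ENNReal.ofReal t < D0 ω}).toReal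
          + l * ∫ s in (0 : ℝ)..t,
              (μ {ω | (∫⁻ u in Set.Ioc s t, ENNReal.ofReal ((z u)⁻¹)) < B ω ∧
                ENNReal.ofReal (t - s) < D ω}).toReal)
    (hsub : ENNReal.ofReal l * ∫⁻ ω in {ω | D ω = ⊤}, B ω ∂μ < 1)
    (hmin : ∫⁻ ω, min (B ω) (D ω) ∂μ ≠ ⊤) :
    ∃ M : ℝ, ∀ t : ℝ, 0 ≤ t → z t ≤ M := by
  by_contra hcon
  push_neg at hcon
  have hchoice : ∀ n : ℕ, ∃ s : ℝ, 0 ≤ s ∧ (n:ℝ) + 1 < z s ∧ ∀ u ∈ Set.Icc (0:ℝ) s, z u ≤ z s := by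
    intro n
    obtain ⟨t, ht0, hzt⟩ := hcon ((n:ℝ) + 1)
    obtain ⟨s, hsmem, hmax⟩ := isCompact_Icc.exists_isMaxOn (s := Set.Icc (0:ℝ) t)
      ⟨0, Set.left_mem_Icc.mpr ht0⟩ hzcont.continuousOn
    exact ⟨s, hsmem.1, lt_of_lt_of_le hzt (hmax (Set.right_mem_Icc.mpr ht0)),
      fun u hu => hmax ⟨hu.1, hu.2.trans hsmem.2⟩⟩
  choose s hs0 hsgt hsmax using hchoice
  set Ms : ℕ → ℝ := fun n => z (s n) with hMs
  have hM1 : ∀ n, 1 ≤ Ms n := by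
    intro n
    have h1 := hsgt n
    have h2 : (0:ℝ) ≤ n := Nat.cast_nonneg n
    simp only [hMs]
    linarith
  have hMtop : Tendsto Ms atTop atTop := by
    refine tendsto_atTop_mono (fun n => (hsgt n).le) ?_
    exact tendsto_atTop_add_const_right _ 1 tendsto_natCast_atTop_atTop
  -- key inequality
  have hkey : ∀ n, Ms n ≤ z₀ + l * (Ms n *
      (∫⁻ ω, min (B ω) (D ω / ENNReal.ofReal (Ms n)) ∂μ).toReal) := by
    intro n
    have h1 := fluid_key μ B D B0 D0 hB hD z z₀ l hz₀ hl hzcont hinf heq hmin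
      (s n) (hs0 n) (Ms n) (hM1 n) (hsmax n)
    have hc0 : ENNReal.ofReal (Ms n) ≠ 0 :=
      (ENNReal.ofReal_pos.mpr (lt_of_lt_of_le one_pos (hM1 n))).ne'
    have h2 : (∫⁻ ω, min (ENNReal.ofReal (Ms n) * B ω) (D ω) ∂μ)
        = ENNReal.ofReal (Ms n) * ∫⁻ ω, min (B ω) (D ω / ENNReal.ofReal (Ms n)) ∂μ := by
      rw [← lintegral_const_mul _ (hB.min (hD.div_const _))]
      exact lintegral_congr fun ω =>
        fluid_min_mul_div _ _ _ hc0 ENNReal.ofReal_ne_top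
    rw [h2, ENNReal.toReal_mul, ENNReal.toReal_ofReal (by linarith [hM1 n])] at h1
    exact h1
  -- limit quantities
  set β : ℝ≥0∞ := ∫⁻ ω in {ω | D ω = ⊤}, B ω ∂μ with hβ
  have hβfin : β ≠ ⊤ := by
    have hle : β ≤ ∫⁻ ω, min (B ω) (D ω) ∂μ := by
      have hcongr : β = ∫⁻ ω in {ω | D ω = ⊤}, min (B ω) (D ω) ∂μ := by
        refine setLIntegral_congr_fun (hD (measurableSet_singleton ⊤)) ?_
        intro ω hω
        dsimp only
        rw [show D ω = ⊤ from hω]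
        exact (min_eq_left le_top).symm
      rw [hcongr]
      exact setLIntegral_le_lintegral _ _
    exact ne_top_of_le_ne_top hmin hle
  have hlβ : l * β.toReal < 1 := by
    have h := (ENNReal.toReal_lt_toReal
      (ENNReal.mul_ne_top ENNReal.ofReal_ne_top hβfin) ENNReal.one_ne_top).mpr hsub
    rwa [ENNReal.toReal_mul, ENNReal.toReal_ofReal hl.le, ENNReal.toReal_one] at h
  have hlβnn : 0 ≤ l * β.toReal := mul_nonneg hl.le ENNReal.toReal_nonneg
  set δ : ℝ := (l * β.toReal + 1)/2 with hδ
  have hδlt1 : δ < 1 := by rw [hδ]; linarith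
  have hδgt : l * β.toReal < δ := by rw [hδ]; linarith
  have hεtend : Tendsto (fun n =>
      l * (∫⁻ ω, min (B ω) (D ω / ENNReal.ofReal (Ms n)) ∂μ).toReal) atTop
      (𝓝 (l * β.toReal)) := by
    have h := fluid_dct μ B D hB hD hmin Ms hM1 hMtop
    exact ((ENNReal.tendsto_toReal hβfin).comp h).const_mul l
  have hev1 := hεtend.eventually_lt_const hδgt
  have hev2 := hMtop.eventually_gt_atTop (z₀ / (1 - δ))
  obtain ⟨n, h1, h2⟩ := (hev1.and hev2).exists
  have hkn := hkey n
  have hMn0 : (0:ℝ) ≤ Ms n := by linarith [hM1 n]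
  have h4 : Ms n * (l * (∫⁻ ω, min (B ω) (D ω / ENNReal.ofReal (Ms n)) ∂μ).toReal)
      ≤ Ms n * δ := mul_le_mul_of_nonneg_left h1.le hMn0
  have h3 : z₀ < Ms n * (1 - δ) := (div_lt_iff₀ (by linarith)).mp h2
  nlinarith [hkn, h4, h3]
end

section
/- If B is exponentially distributed with rate μ and independent of D, and ρ = λ/μ > 1, then the success probability P_s = P(D > z∞B) equals 1/ρ, regardless of the distribution of D, where z∞ solves λ∫₀^∞ e^{−μu}P(D ≥ z∞u) du = 1. -/
open MeasureTheory ENNReal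
open Set Real ProbabilityTheory

lemma expMeasure_def (m : ℝ) : expMeasure m = volume.withDensity (exponentialPDF m) := rfl

lemma expMeasure_Iio (m : ℝ) (hm : 0 < m) (y : ℝ) (hy : 0 ≤ y) :
    expMeasure m (Iio y) = ENNReal.ofReal (1 - Real.exp (-(m * y))) := by
  have hsing : expMeasure m {y} = 0 :=
    (withDensity_absolutelyContinuous volume _) (measure_singleton y)
  have hIic : expMeasure m (Iic y) = ENNReal.ofReal (1 - Real.exp (-(m * y))) := by
    rw [expMeasure_def, withDensity_apply _ measurableSet_Iic,
      lintegral_exponentialPDF_eq_antiDeriv hm, if_pos hy]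
  have : expMeasure m (Iic y) = expMeasure m (Iio y) := by
    refine le_antisymm ?_ (measure_mono Iio_subset_Iic_self)
    calc expMeasure m (Iic y) ≤ expMeasure m (Iio y) + expMeasure m {y} := by
          rw [← Iio_union_right]; exact measure_union_le _ _
      _ = expMeasure m (Iio y) := by rw [hsing, add_zero]
  rw [← this, hIic]

lemma expMeasure_Ici (m : ℝ) (hm : 0 < m) (y : ℝ) (hy : 0 ≤ y) :
    expMeasure m (Ici y) = ENNReal.ofReal (Real.exp (-(m * y))) := by
  have hprob : IsProbabilityMeasure (expMeasure m) := isProbabilityMeasure_expMeasure hm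
  have hc : expMeasure m (Ici y) = 1 - expMeasure m (Iio y) := by
    rw [← compl_Iio, measure_compl measurableSet_Iio (measure_ne_top _ _), measure_univ]
  have he : Real.exp (-(m * y)) ≤ 1 := by
    rw [Real.exp_le_one_iff]; nlinarith
  rw [hc, expMeasure_Iio m hm y hy, ← ENNReal.ofReal_one,
    ← ENNReal.ofReal_sub _ (by linarith : (0:ℝ) ≤ 1 - Real.exp (-(m * y)))]
  congr 1; ring

lemma map_eq_expMeasure {Ω : Type*} [MeasurableSpace Ω] (μ : Measure Ω) [IsProbabilityMeasure μ]
    (B : Ω → ℝ) (hB : Measurable B) (m : ℝ) (hm : 0 < m)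
    (hBexp : ∀ x : ℝ, 0 ≤ x → μ {ω | x ≤ B ω} = ENNReal.ofReal (Real.exp (-m * x))) :
    μ.map B = expMeasure m := by
  have hprob : IsProbabilityMeasure (μ.map B) := Measure.isProbabilityMeasure_map hB.aemeasurable
  have hprob' : IsProbabilityMeasure (expMeasure m) := isProbabilityMeasure_expMeasure hm
  refine Measure.ext_of_Ici _ _ (fun x => ?_)
  have hmap : (μ.map B) (Ici x) = μ {ω | x ≤ B ω} := by
    rw [Measure.map_apply hB measurableSet_Ici]; rfl
  rcases le_or_gt 0 x with hx | hx
  · rw [hmap, hBexp x hx, expMeasure_Ici m hm x hx, neg_mul]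
  · have h1 : (μ.map B) (Ici x) = 1 := by
      refine le_antisymm prob_le_one ?_
      have : (μ.map B) (Ici (0:ℝ)) = 1 := by
        rw [Measure.map_apply hB measurableSet_Ici]
        have := hBexp 0 le_rfl
        simp at this
        exact this
      rw [← this]
      exact measure_mono (Ici_subset_Ici.mpr hx.le)
    have h2 : expMeasure m (Ici x) = 1 := by
      have hIio : expMeasure m (Iio x) = 0 := by
        rw [expMeasure_def, withDensity_apply _ measurableSet_Iio]
        exact lintegral_exponentialPDF_of_nonpos hx.le
      rw [← compl_Iio, measure_compl measurableSet_Iio (measure_ne_top _ _), measure_univ, hIio,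
        tsub_zero]
    rw [h1, h2]

/-- If `B` is exponential with rate `m`, independent of `D`, and `ρ = λ/m > 1`,
then the success probability `P(D > z∞ B)` equals `1/ρ`, regardless of the
distribution of `D`, where `z∞` solves `λ ∫₀^∞ e^{-mu} P(D ≥ z∞ u) du = 1`. -/
theorem exponential_service_insensitivity
    {Ω : Type*} [MeasurableSpace Ω] (μ : Measure Ω) [IsProbabilityMeasure μ]
    (B D : Ω → ℝ) (hB : Measurable B) (hD : Measurable D)
    (hindep : ProbabilityTheory.IndepFun B D μ)
    (m l : ℝ) (hm : 0 < m) (hl : 0 < l) (hρ : 1 < l / m)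
    (hBexp : ∀ x : ℝ, 0 ≤ x → μ {ω | x ≤ B ω} = ENNReal.ofReal (Real.exp (-m * x)))
    (z : ℝ) (hz : 0 < z)
    (hfp : l * ∫ u in Set.Ioi (0 : ℝ),
        Real.exp (-m * u) * (μ {ω | z * u ≤ D ω}).toReal = 1) :
    (μ {ω | z * B ω < D ω}).toReal = 1 / (l / m) := by
  have hprobD : IsProbabilityMeasure (μ.map D) := Measure.isProbabilityMeasure_map hD.aemeasurable
  have hBmap : μ.map B = expMeasure m := map_eq_expMeasure μ B hB m hm hBexp
  have hS : MeasurableSet {p : ℝ × ℝ | z * p.1 < p.2} :=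
    measurableSet_lt (measurable_fst.const_mul z) measurable_snd
  have hS' : MeasurableSet {p : ℝ × ℝ | z * p.1 ≤ p.2} :=
    measurableSet_le (measurable_fst.const_mul z) measurable_snd
  have hprod : μ.map (fun ω => (B ω, D ω)) = (μ.map B).prod (μ.map D) :=
    (ProbabilityTheory.indepFun_iff_map_prod_eq_prod_map_map hB.aemeasurable
      hD.aemeasurable).mp hindep
  -- step 1: independence
  have key1 : μ {ω | z * B ω < D ω}
      = ∫⁻ b, (μ.map D) {d | z * b < d} ∂(μ.map B) := by
    have h1 : μ {ω | z * B ω < D ω}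
        = (μ.map (fun ω => (B ω, D ω))) {p : ℝ × ℝ | z * p.1 < p.2} := by
      rw [Measure.map_apply (hB.prodMk hD) hS]; rfl
    rw [h1, hprod, Measure.prod_apply hS]; rfl
  have hmeasg : Measurable fun b : ℝ => (μ.map D) {d | z * b < d} :=
    measurable_measure_prodMk_left (ν := μ.map D) hS
  -- step 2: withDensity
  have key2 : μ {ω | z * B ω < D ω}
      = ∫⁻ b, exponentialPDF m b * (μ.map D) {d | z * b < d} := by
    rw [key1, hBmap, expMeasure_def]
    have hpdfmeas : Measurable (exponentialPDF m) :=
      (measurable_exponentialPDFReal m).ennreal_ofReal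
    have := lintegral_withDensity_eq_lintegral_mul volume hpdfmeas hmeasg
    simp only [Pi.mul_apply] at this
    exact this
  -- countable atoms of μ.map D
  have hct : Set.Countable {d : ℝ | 0 < (μ.map D) {d}} := by
    refine Measure.countable_meas_pos_of_disjoint_of_meas_iUnion_ne_top (μ.map D)
      (fun d : ℝ => measurableSet_singleton d)
      (fun i j hij => by simp [Function.onFun, hij]) ?_
    exact measure_ne_top _ _
  have hbad : Set.Countable {b : ℝ | 0 < (μ.map D) {z * b}} := by
    have hsub : {b : ℝ | 0 < (μ.map D) {z * b}}
        ⊆ (fun d => d / z) '' {d : ℝ | 0 < (μ.map D) {d}} := by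
      intro b hb
      exact ⟨z * b, hb, by field_simp⟩
    exact (hct.image _).mono hsub
  have hIcimap : ∀ b : ℝ, (μ.map D) (Ici (z * b)) = μ {ω | z * b ≤ D ω} := fun b => by
    rw [Measure.map_apply hD measurableSet_Ici]; rfl
  set t : ℝ → ℝ := fun b => (μ {ω | z * b ≤ D ω}).toReal with ht
  have ht_nonneg : ∀ b, 0 ≤ t b := fun b => ENNReal.toReal_nonneg
  have ht_le_one : ∀ b, t b ≤ 1 := fun b => by
    rw [ht]
    exact ENNReal.toReal_le_of_le_ofReal zero_le_one (by simpa using prob_le_one)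
  -- step 3: a.e. rewrite as indicator
  have key3 : (fun b => exponentialPDF m b * (μ.map D) {d | z * b < d})
      =ᵐ[volume] (Ioi (0:ℝ)).indicator
        (fun b => ENNReal.ofReal (m * Real.exp (-m * b) * t b)) := by
    filter_upwards [hbad.ae_notMem volume,
      (Set.countable_singleton (0:ℝ)).ae_notMem volume] with b hb hb0
    rcases lt_trichotomy b 0 with hblt | hbeq | hbgt
    · rw [exponentialPDF_of_neg hblt, zero_mul,
        Set.indicator_of_notMem (by simpa using hblt.le)]
    · exact absurd hbeq hb0
    · have hatom : (μ.map D) {z * b} = 0 := by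
        by_contra h
        exact hb (pos_iff_ne_zero.mpr h)
      have hIoiIci : (μ.map D) {d | z * b < d} = (μ.map D) (Ici (z * b)) := by
        refine le_antisymm (measure_mono (fun d (hd : z * b < d) => Set.mem_Ici.mpr (le_of_lt hd))) ?_
        calc (μ.map D) (Ici (z * b))
            ≤ (μ.map D) ({z * b} ∪ Ioi (z * b)) := by
              refine measure_mono (fun d hd => ?_)
              rcases eq_or_lt_of_le (Set.mem_Ici.mp hd) with h | h
              · exact Or.inl h.symm
              · exact Or.inr h
          _ ≤ (μ.map D) {z * b} + (μ.map D) (Ioi (z * b)) := measure_union_le _ _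
          _ = (μ.map D) {d | z * b < d} := by rw [hatom, zero_add]; rfl
      rw [hIoiIci, hIcimap, exponentialPDF_of_nonneg hbgt.le,
        Set.indicator_of_mem (by simpa using hbgt)]
      rw [← ENNReal.ofReal_toReal (measure_ne_top μ {ω | z * b ≤ D ω}),
        ← ENNReal.ofReal_mul (by positivity)]
      simp only [ht, neg_mul]
  -- step 4: convert to Bochner integral
  have hmeas_t : Measurable fun b : ℝ => m * Real.exp (-m * b) * t b := by
    have h1 : Measurable fun b : ℝ => (μ.map D) (Ici (z * b)) := by
      have := measurable_measure_prodMk_left (ν := μ.map D) hS'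
      convert this using 2 with b
      rfl
    have h2 : Measurable t := by
      have : t = fun b => ((μ.map D) (Ici (z * b))).toReal := by
        funext b; rw [ht, hIcimap]
      rw [this]
      exact h1.ennreal_toReal
    exact (((measurable_id.const_mul (-m)).exp).const_mul m).mul h2
  have hint : IntegrableOn (fun b : ℝ => m * Real.exp (-m * b) * t b) (Ioi 0) := by
    refine Integrable.mono ((exp_neg_integrableOn_Ioi 0 hm).const_mul m)
      hmeas_t.aestronglyMeasurable ?_
    refine Filter.Eventually.of_forall fun b => ?_
    have h1 : 0 ≤ Real.exp (-m * b) := Real.exp_nonneg _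
    rw [Real.norm_eq_abs, Real.norm_eq_abs, abs_of_nonneg (by positivity),
      abs_of_nonneg (by positivity)]
    exact mul_le_of_le_one_right (by positivity) (ht_le_one b)
  have key4 : μ {ω | z * B ω < D ω}
      = ENNReal.ofReal (∫ b in Ioi (0:ℝ), m * Real.exp (-m * b) * t b) := by
    rw [key2, lintegral_congr_ae key3, lintegral_indicator measurableSet_Ioi _,
      ← ofReal_integral_eq_lintegral_ofReal hint
        (Filter.Eventually.of_forall fun b => by positivity)]
  -- step 5: evaluate using the fixed point equation
  have hI : ∫ u in Ioi (0:ℝ), Real.exp (-m * u) * t u = 1 / l :=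
    eq_one_div_of_mul_eq_one_right hfp
  have key5 : ∫ b in Ioi (0:ℝ), m * Real.exp (-m * b) * t b = m / l := by
    have : (fun b => m * Real.exp (-m * b) * t b)
        = fun b => m * (Real.exp (-m * b) * t b) := by funext b; ring
    rw [this, integral_const_mul, hI]
    ring
  rw [key4, key5, ENNReal.toReal_ofReal (by positivity)]
  field_simp
end

section
/- Suppose the fluid model data satisfy z₀ > 0 and F₀(x,y) = P(B⁰ ≥ x; D⁰ ≥ y) is Lipschitz continuous in y with constant L. Then the time-changed fluid equation z̃(t) = z₀P(B⁰ ≥ t; D⁰ ≥ S̃(t)) + λ∫₀ᵗ z̃(u)P(B ≥ t−u; D ≥ S̃(t)−S̃(u)) du, with S̃(t) = ∫₀ᵗ z̃(u)du, has at most one solution on the interval [0, a] where a = 1/(2(z₀L + 4λ)). -/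
open MeasureTheory ENNReal

private lemma abel_aux {δ : ℝ} (r D : ℕ → ℝ) (hrm : Monotone r) (hr0 : ∀ i, 0 ≤ r i)
    (hD : ∀ i, |D i| ≤ δ) :
    ∀ n : ℕ, ∑ i ∈ Finset.range (n + 1), r i * (D (i + 1) - D i) ≤ r n * (D (n + 1) + δ) := by
  intro n
  induction n with
  | zero =>
      rw [Finset.sum_range_one]
      have h := abs_le.1 (hD 0)
      nlinarith [mul_nonneg (hr0 0) (show (0:ℝ) ≤ D 0 + δ by linarith [h.1])]
  | succ n ih =>
      rw [Finset.sum_range_succ]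
      have h1 : r n ≤ r (n + 1) := hrm (Nat.le_succ n)
      have h2 := abs_le.1 (hD (n + 1))
      nlinarith [ih, mul_nonneg (sub_nonneg.2 h1) (show (0:ℝ) ≤ D (n + 1) + δ by linarith [h2.1])]

private lemma abel_bound {δ : ℝ} (hδ : 0 ≤ δ) (r D : ℕ → ℝ) (hrm : Monotone r)
    (hr0 : ∀ i, 0 ≤ r i) (hr1 : ∀ i, r i ≤ 1) (hD : ∀ i, |D i| ≤ δ) (n : ℕ) :
    ∑ i ∈ Finset.range n, r i * (D (i + 1) - D i) ≤ 2 * δ := by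
  cases n with
  | zero => simp; linarith
  | succ m =>
      have h := abel_aux r D hrm hr0 hD m
      have h2 := abs_le.1 (hD (m + 1))
      have h3 : r m * (D (m + 1) + δ) ≤ 1 * (D (m + 1) + δ) :=
        mul_le_mul_of_nonneg_right (hr1 m) (by linarith [h2.1])
      linarith

private lemma primitive_mono {t : ℝ} {f : ℝ → ℝ} (ht : 0 ≤ t)
    (hf : ContinuousOn f (Set.Icc 0 t)) (hfnn : ∀ x, 0 ≤ f x)
    {x y : ℝ} (hx : x ∈ Set.Icc (0:ℝ) t) (hy : y ∈ Set.Icc (0:ℝ) t) (hxy : x ≤ y) :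
    (∫ v in (0:ℝ)..x, f v) ≤ ∫ v in (0:ℝ)..y, f v := by
  have huIcc : Set.uIcc (0:ℝ) t = Set.Icc 0 t := Set.uIcc_of_le ht
  have hfI : IntervalIntegrable f volume 0 t :=
    (show ContinuousOn f (Set.uIcc 0 t) by rw [huIcc]; exact hf).intervalIntegrable
  have h0t : (0:ℝ) ∈ Set.uIcc (0:ℝ) t := by rw [huIcc]; exact Set.left_mem_Icc.2 ht
  have hxu : x ∈ Set.uIcc (0:ℝ) t := by rw [huIcc]; exact hx
  have hyu : y ∈ Set.uIcc (0:ℝ) t := by rw [huIcc]; exact hy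
  have h0x : IntervalIntegrable f volume 0 x := hfI.mono_set (Set.uIcc_subset_uIcc h0t hxu)
  have hxy' : IntervalIntegrable f volume x y := hfI.mono_set (Set.uIcc_subset_uIcc hxu hyu)
  have hadd := intervalIntegral.integral_add_adjacent_intervals h0x hxy'
  have hnn : 0 ≤ ∫ v in x..y, f v := intervalIntegral.integral_nonneg hxy fun u _ => hfnn u
  linarith

private lemma key_comparison {t δ : ℝ} (ht : 0 ≤ t) (hδ : 0 < δ)
    (z g ρ σ : ℝ → ℝ)
    (hz : ContinuousOn z (Set.Icc 0 t)) (hg : ContinuousOn g (Set.Icc 0 t))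
    (hznn : ∀ u, 0 ≤ z u) (hgnn : ∀ u, 0 ≤ g u)
    (hST : ∀ u ∈ Set.Icc (0:ℝ) t,
      |(∫ v in (0:ℝ)..u, z v) - ∫ v in (0:ℝ)..u, g v| ≤ δ)
    (hρm : Monotone ρ) (hσm : Monotone σ)
    (hρ0 : ∀ u, 0 ≤ ρ u) (hρ1 : ∀ u, ρ u ≤ 1)
    (hσ0 : ∀ u, 0 ≤ σ u) (hσ1 : ∀ u, σ u ≤ 1)
    (hcpl : ∀ v u' : ℝ, 0 ≤ v → v ≤ u' → u' ≤ t →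
      (∫ x in (0:ℝ)..v, g x) + 2 * δ ≤ (∫ x in (0:ℝ)..u', g x) → σ v ≤ ρ u') :
    (∫ x in (0:ℝ)..t, g x * σ x) ≤ (∫ x in (0:ℝ)..t, z x * ρ x) + 4 * δ := by
  have h0mem : (0:ℝ) ∈ Set.Icc (0:ℝ) t := Set.left_mem_Icc.2 ht
  have htmem : t ∈ Set.Icc (0:ℝ) t := Set.right_mem_Icc.2 ht
  have huIcc : Set.uIcc (0:ℝ) t = Set.Icc 0 t := Set.uIcc_of_le ht
  have hzI : IntervalIntegrable z volume 0 t :=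
    (show ContinuousOn z (Set.uIcc 0 t) by rw [huIcc]; exact hz).intervalIntegrable
  have hgI : IntervalIntegrable g volume 0 t :=
    (show ContinuousOn g (Set.uIcc 0 t) by rw [huIcc]; exact hg).intervalIntegrable
  have hsub : ∀ x y : ℝ, x ∈ Set.Icc (0:ℝ) t → y ∈ Set.Icc (0:ℝ) t →
      Set.uIcc x y ⊆ Set.uIcc (0:ℝ) t := by
    intro x y hx hy
    exact Set.uIcc_subset_uIcc (by rw [huIcc]; exact hx) (by rw [huIcc]; exact hy)
  have hzIxy : ∀ x y : ℝ, x ∈ Set.Icc (0:ℝ) t → y ∈ Set.Icc (0:ℝ) t →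
      IntervalIntegrable z volume x y := fun x y hx hy => hzI.mono_set (hsub x y hx hy)
  have hgIxy : ∀ x y : ℝ, x ∈ Set.Icc (0:ℝ) t → y ∈ Set.Icc (0:ℝ) t →
      IntervalIntegrable g volume x y := fun x y hx hy => hgI.mono_set (hsub x y hx hy)
  have hσmeas : Measurable σ := hσm.measurable
  have hρmeas : Measurable ρ := hρm.measurable
  have hgσI : ∀ x y : ℝ, x ∈ Set.Icc (0:ℝ) t → y ∈ Set.Icc (0:ℝ) t →
      IntervalIntegrable (fun x => g x * σ x) volume x y := by
    intro x y hx hy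
    refine (hgIxy x y hx hy).mono_fun
      ((hgIxy x y hx hy).def'.aestronglyMeasurable.mul hσmeas.aestronglyMeasurable)
      (Filter.Eventually.of_forall fun x' => ?_)
    simp only [Real.norm_eq_abs, abs_mul]
    calc |g x'| * |σ x'| ≤ |g x'| * 1 := by
          refine mul_le_mul_of_nonneg_left ?_ (abs_nonneg _)
          rw [abs_of_nonneg (hσ0 x')]; exact hσ1 x'
      _ = |g x'| := mul_one _
  have hzρI : ∀ x y : ℝ, x ∈ Set.Icc (0:ℝ) t → y ∈ Set.Icc (0:ℝ) t →
      IntervalIntegrable (fun x => z x * ρ x) volume x y := by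
    intro x y hx hy
    refine (hzIxy x y hx hy).mono_fun
      ((hzIxy x y hx hy).def'.aestronglyMeasurable.mul hρmeas.aestronglyMeasurable)
      (Filter.Eventually.of_forall fun x' => ?_)
    simp only [Real.norm_eq_abs, abs_mul]
    calc |z x'| * |ρ x'| ≤ |z x'| * 1 := by
          refine mul_le_mul_of_nonneg_left ?_ (abs_nonneg _)
          rw [abs_of_nonneg (hρ0 x')]; exact hρ1 x'
      _ = |z x'| := mul_one _
  have hTdiff : ∀ x y : ℝ, x ∈ Set.Icc (0:ℝ) t → y ∈ Set.Icc (0:ℝ) t →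
      (∫ v in x..y, g v) = (∫ v in (0:ℝ)..y, g v) - ∫ v in (0:ℝ)..x, g v := by
    intro x y hx hy
    have := intervalIntegral.integral_add_adjacent_intervals (hgIxy 0 x h0mem hx)
      (hgIxy x y hx hy)
    linarith
  have hSdiff : ∀ x y : ℝ, x ∈ Set.Icc (0:ℝ) t → y ∈ Set.Icc (0:ℝ) t →
      (∫ v in x..y, z v) = (∫ v in (0:ℝ)..y, z v) - ∫ v in (0:ℝ)..x, z v := by
    intro x y hx hy
    have := intervalIntegral.integral_add_adjacent_intervals (hzIxy 0 x h0mem hx)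
      (hzIxy x y hx hy)
    linarith
  have hTcont : ContinuousOn (fun x => ∫ v in (0:ℝ)..x, g v) (Set.Icc 0 t) := by
    have h := intervalIntegral.continuousOn_primitive_interval
      (a := 0) (b := t) (μ := volume) (f := g) (by rw [huIcc]; exact hg.integrableOn_Icc)
    rwa [huIcc] at h
  have htot0 : 0 ≤ ∫ v in (0:ℝ)..t, g v := intervalIntegral.integral_nonneg ht fun x _ => hgnn x
  have hzρ0 : 0 ≤ ∫ x in (0:ℝ)..t, z x * ρ x :=
    intervalIntegral.integral_nonneg ht fun x _ => mul_nonneg (hznn x) (hρ0 x)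
  rcases eq_or_lt_of_le htot0 with h0 | hpos
  · have h1 : (∫ x in (0:ℝ)..t, g x * σ x) ≤ ∫ x in (0:ℝ)..t, g x :=
      intervalIntegral.integral_mono_on ht (hgσI 0 t h0mem htmem) hgI fun x _ =>
        mul_le_of_le_one_right (hgnn x) (hσ1 x)
    linarith
  -- main case : 0 < ∫ g
  have hmain : ∀ n : ℕ, 0 < n →
      (∫ x in (0:ℝ)..t, g x * σ x) ≤ (∫ x in (0:ℝ)..t, z x * ρ x) + 4 * δ
        + 2 * ((∫ v in (0:ℝ)..t, g v) / n) := by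
    intro n hn
    set G : ℝ := ∫ v in (0:ℝ)..t, g v with hG
    set η : ℝ := G / n with hηdef
    have hη : 0 < η := div_pos hpos (Nat.cast_pos.2 hn)
    have hnη : (n:ℝ) * η = G := by
      rw [hηdef]; field_simp
    set k : ℕ := ⌈2 * δ / η⌉₊ with hkdef
    have hk1 : 2 * δ ≤ (k:ℝ) * η := by
      have h := Nat.le_ceil (2 * δ / η)
      rw [div_le_iff₀ hη] at h
      exact h
    have hk2 : (k:ℝ) * η ≤ 2 * δ + η := by
      have h : (k:ℝ) < 2 * δ / η + 1 := Nat.ceil_lt_add_one (by positivity)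
      have h2 := mul_lt_mul_of_pos_right h hη
      rw [add_mul, div_mul_cancel₀ _ (ne_of_gt hη), one_mul] at h2
      linarith
    -- the partition points
    set u : ℕ → ℝ := fun i =>
      sInf (Set.Icc 0 t ∩ (fun x => ∫ v in (0:ℝ)..x, g v) ⁻¹' Set.Ici (min ((i:ℝ) * η) G))
      with hudef
    have hAne : ∀ i : ℕ, (Set.Icc 0 t ∩
        (fun x => ∫ v in (0:ℝ)..x, g v) ⁻¹' Set.Ici (min ((i:ℝ) * η) G)).Nonempty := by
      intro i
      refine ⟨t, htmem, ?_⟩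
      simp only [Set.mem_preimage, Set.mem_Ici]
      exact (min_le_right _ _).trans (le_of_eq hG.symm)
    have hAbdd : ∀ i : ℕ, BddBelow (Set.Icc 0 t ∩
        (fun x => ∫ v in (0:ℝ)..x, g v) ⁻¹' Set.Ici (min ((i:ℝ) * η) G)) := fun i =>
      (BddBelow.mono Set.inter_subset_left bddBelow_Icc)
    have hAclosed : ∀ i : ℕ, IsClosed (Set.Icc 0 t ∩
        (fun x => ∫ v in (0:ℝ)..x, g v) ⁻¹' Set.Ici (min ((i:ℝ) * η) G)) := fun i =>
      hTcont.preimage_isClosed_of_isClosed isClosed_Icc isClosed_Ici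
    have huA : ∀ i : ℕ, u i ∈ Set.Icc 0 t ∩
        (fun x => ∫ v in (0:ℝ)..x, g v) ⁻¹' Set.Ici (min ((i:ℝ) * η) G) := fun i =>
      (hAclosed i).csInf_mem (hAne i) (hAbdd i)
    have huIcc' : ∀ i : ℕ, u i ∈ Set.Icc (0:ℝ) t := fun i => (huA i).1
    have huLB : ∀ i : ℕ, min ((i:ℝ) * η) G ≤ ∫ v in (0:ℝ)..(u i), g v := fun i => (huA i).2
    have humono : ∀ i j : ℕ, i ≤ j → u i ≤ u j := by
      intro i j hij
      refine csInf_le_csInf (hAbdd i) (hAne j) ?_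
      intro x hx
      refine ⟨hx.1, ?_⟩
      simp only [Set.mem_preimage, Set.mem_Ici] at hx ⊢
      refine le_trans (min_le_min ?_ le_rfl) hx.2
      exact mul_le_mul_of_nonneg_right (by exact_mod_cast hij) hη.le
    have huT : ∀ i : ℕ, (∫ v in (0:ℝ)..(u i), g v) = min ((i:ℝ) * η) G := by
      intro i
      refine le_antisymm ?_ (huLB i)
      by_contra hlt
      push_neg at hlt
      have hmem : min ((i:ℝ) * η) G ∈
          Set.Icc (∫ v in (0:ℝ)..(0:ℝ), g v) (∫ v in (0:ℝ)..(u i), g v) := by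
        constructor
        · rw [intervalIntegral.integral_same]
          exact le_min (by positivity) htot0
        · exact hlt.le
      obtain ⟨x, hx, hTx⟩ := intermediate_value_Icc (huIcc' i).1
        (hTcont.mono (Set.Icc_subset_Icc le_rfl (huIcc' i).2)) hmem
      have hxA : x ∈ Set.Icc 0 t ∩
          (fun x => ∫ v in (0:ℝ)..x, g v) ⁻¹' Set.Ici (min ((i:ℝ) * η) G) := by
        refine ⟨⟨hx.1, le_trans hx.2 (huIcc' i).2⟩, ?_⟩
        simp only [Set.mem_preimage, Set.mem_Ici]
        exact le_of_eq hTx.symm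
      have hux : u i ≤ x := csInf_le (hAbdd i) hxA
      have hxe : x = u i := le_antisymm hx.2 hux
      rw [hxe] at hTx
      have hTx' : (∫ v in (0:ℝ)..(u i), g v) = min ((i:ℝ) * η) G := hTx
      rw [hTx'] at hlt
      exact lt_irrefl _ hlt
    have huTn : ∀ i : ℕ, i ≤ n → (∫ v in (0:ℝ)..(u i), g v) = (i:ℝ) * η := by
      intro i hi
      rw [huT i, min_eq_left]
      rw [← hnη]
      exact mul_le_mul_of_nonneg_right (by exact_mod_cast hi) hη.le
    have hu0 : u 0 = 0 := by
      refine le_antisymm ?_ (huIcc' 0).1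
      refine csInf_le (hAbdd 0) ?_
      refine ⟨h0mem, ?_⟩
      simp only [Set.mem_preimage, Set.mem_Ici, Nat.cast_zero, zero_mul,
        intervalIntegral.integral_same]
      exact min_le_of_left_le le_rfl
    -- Step A
    have hpieceg : ∀ i : ℕ, i < n → (∫ x in u i..u (i+1), g x * σ x) ≤ σ (u (i+1)) * η := by
      intro i hi
      have hle : u i ≤ u (i+1) := humono i (i+1) (Nat.le_succ i)
      have h1 : (∫ x in u i..u (i+1), g x * σ x) ≤ ∫ x in u i..u (i+1), g x * σ (u (i+1)) := by
        refine intervalIntegral.integral_mono_on hle (hgσI _ _ (huIcc' i) (huIcc' (i+1)))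
          ((hgIxy _ _ (huIcc' i) (huIcc' (i+1))).mul_const _) fun x hx => ?_
        exact mul_le_mul_of_nonneg_left (hσm hx.2) (hgnn x)
      have hTi : (∫ x in u i..u (i+1), g x) = η := by
        rw [hTdiff (u i) (u (i+1)) (huIcc' i) (huIcc' (i+1)), huTn (i+1) hi,
          huTn i (le_of_lt hi)]
        push_cast; ring
      have h2 : (∫ x in u i..u (i+1), g x * σ (u (i+1))) = σ (u (i+1)) * η := by
        rw [intervalIntegral.integral_mul_const, hTi]; ring
      linarith
    have hsplitg : (∫ x in (0:ℝ)..t, g x * σ x)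
        = (∑ i ∈ Finset.range n, ∫ x in u i..u (i+1), g x * σ x)
          + ∫ x in u n..t, g x * σ x := by
      rw [intervalIntegral.sum_integral_adjacent_intervals
        (fun i _ => hgσI _ _ (huIcc' i) (huIcc' (i+1)))]
      rw [hu0]
      exact (intervalIntegral.integral_add_adjacent_intervals
        (hgσI 0 (u n) h0mem (huIcc' n)) (hgσI (u n) t (huIcc' n) htmem)).symm
    have htail : (∫ x in u n..t, g x * σ x) ≤ 0 := by
      have h1 : (∫ x in u n..t, g x * σ x) ≤ ∫ x in u n..t, g x :=
        intervalIntegral.integral_mono_on (huIcc' n).2 (hgσI _ _ (huIcc' n) htmem)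
          (hgIxy _ _ (huIcc' n) htmem) fun x _ => mul_le_of_le_one_right (hgnn x) (hσ1 x)
      have h2 : (∫ x in u n..t, g x) = 0 := by
        rw [hTdiff (u n) t (huIcc' n) htmem, huTn n le_rfl, ← hG, ← hnη, sub_self]
      linarith
    have hstepA : (∫ x in (0:ℝ)..t, g x * σ x) ≤ ∑ i ∈ Finset.range n, σ (u (i+1)) * η := by
      rw [hsplitg]
      have h := Finset.sum_le_sum fun i hi => hpieceg i (Finset.mem_range.1 hi)
      linarith
    -- Step B : index shift using the coupling
    set m : ℕ := n - (k+1) with hmdef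
    have hstepB : (∑ i ∈ Finset.range n, σ (u (i+1)) * η)
        ≤ (∑ i ∈ Finset.range n, ρ (u i) * η) + (2*δ + 2*η) := by
      have hmn : m ≤ n := Nat.sub_le n (k+1)
      have hsplit : (∑ i ∈ Finset.range n, σ (u (i+1)) * η)
          = (∑ i ∈ Finset.range m, σ (u (i+1)) * η)
            + ∑ i ∈ Finset.Ico m n, σ (u (i+1)) * η := by
        rw [Finset.range_eq_Ico, Finset.range_eq_Ico]
        exact (Finset.sum_Ico_consecutive _ (Nat.zero_le m) hmn).symm
      have hhead : (∑ i ∈ Finset.range m, σ (u (i+1)) * η)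
          ≤ ∑ i ∈ Finset.range m, ρ (u (i+1+k)) * η := by
        refine Finset.sum_le_sum fun i hi => ?_
        have him := Finset.mem_range.1 hi
        have hin : i + 1 + k ≤ n := by omega
        have hcl : σ (u (i+1)) ≤ ρ (u (i+1+k)) := by
          refine hcpl (u (i+1)) (u (i+1+k)) (huIcc' (i+1)).1 (humono _ _ (by omega))
            (huIcc' (i+1+k)).2 ?_
          rw [huTn (i+1) (by omega), huTn (i+1+k) hin]
          push_cast
          nlinarith [hk1]
        exact mul_le_mul_of_nonneg_right hcl hη.le
      have hre : (∑ i ∈ Finset.range m, ρ (u (i+1+k)) * η)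
          = ∑ j ∈ Finset.Ico (k+1) (k+1+m), ρ (u j) * η := by
        rw [Finset.sum_Ico_eq_sum_range]
        simp only [Nat.add_sub_cancel_left]
        refine Finset.sum_congr rfl fun i _ => ?_
        rw [show k+1+i = i+1+k from by omega]
      have hsubsum : (∑ j ∈ Finset.Ico (k+1) (k+1+m), ρ (u j) * η)
          ≤ ∑ j ∈ Finset.range n, ρ (u j) * η := by
        refine Finset.sum_le_sum_of_subset_of_nonneg ?_ fun j _ _ =>
          mul_nonneg (hρ0 _) hη.le
        intro j hj
        rw [Finset.mem_Ico] at hj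
        rw [Finset.mem_range]
        omega
      have htail2 : (∑ i ∈ Finset.Ico m n, σ (u (i+1)) * η) ≤ 2*δ + 2*η := by
        have h1 : (∑ i ∈ Finset.Ico m n, σ (u (i+1)) * η) ≤ ((n - m : ℕ) : ℝ) * η := by
          calc (∑ i ∈ Finset.Ico m n, σ (u (i+1)) * η) ≤ ∑ _i ∈ Finset.Ico m n, η :=
                Finset.sum_le_sum fun i _ => mul_le_of_le_one_left hη.le (hσ1 _)
            _ = ((n - m : ℕ) : ℝ) * η := by
                rw [Finset.sum_const, Nat.card_Ico, nsmul_eq_mul]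
        have h2 : ((n - m : ℕ):ℝ) ≤ (k:ℝ) + 1 := by
          have : n - m ≤ k + 1 := by omega
          exact_mod_cast this
        have h3 : ((n - m : ℕ) : ℝ) * η ≤ ((k:ℝ) + 1) * η :=
          mul_le_mul_of_nonneg_right h2 hη.le
        nlinarith [hk2]
      linarith
    -- Step C : Abel summation
    have hstepC : (∑ i ∈ Finset.range n, ρ (u i) * η)
        ≤ (∑ i ∈ Finset.range n,
            ρ (u i) * ((∫ v in (0:ℝ)..u (i+1), z v) - ∫ v in (0:ℝ)..u i, z v)) + 2*δ := by
      have habel := abel_bound hδ.le (fun i => ρ (u i))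
        (fun i => (∫ v in (0:ℝ)..u i, g v) - ∫ v in (0:ℝ)..u i, z v)
        (fun i j hij => hρm (humono i j hij)) (fun i => hρ0 _) (fun i => hρ1 _)
        (fun i => by rw [abs_sub_comm]; exact hST (u i) (huIcc' i)) n
      have hid : (∑ i ∈ Finset.range n, ρ (u i) * η)
          - (∑ i ∈ Finset.range n,
              ρ (u i) * ((∫ v in (0:ℝ)..u (i+1), z v) - ∫ v in (0:ℝ)..u i, z v))
          = ∑ i ∈ Finset.range n, ρ (u i) *
              (((∫ v in (0:ℝ)..u (i+1), g v) - ∫ v in (0:ℝ)..u (i+1), z v)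
                - ((∫ v in (0:ℝ)..u i, g v) - ∫ v in (0:ℝ)..u i, z v)) := by
        rw [← Finset.sum_sub_distrib]
        refine Finset.sum_congr rfl fun i hi => ?_
        have him := Finset.mem_range.1 hi
        have hηi : η = (∫ v in (0:ℝ)..u (i+1), g v) - ∫ v in (0:ℝ)..u i, g v := by
          rw [huTn (i+1) him, huTn i him.le]
          push_cast; ring
        rw [hηi]; ring
      linarith
    -- Step D
    have hpiecez : ∀ i : ℕ, i < n →
        ρ (u i) * ((∫ v in (0:ℝ)..u (i+1), z v) - ∫ v in (0:ℝ)..u i, z v)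
          ≤ ∫ x in u i..u (i+1), z x * ρ x := by
      intro i _
      have hle : u i ≤ u (i+1) := humono i (i+1) (Nat.le_succ i)
      have h1 : (∫ x in u i..u (i+1), z x * ρ (u i)) ≤ ∫ x in u i..u (i+1), z x * ρ x := by
        refine intervalIntegral.integral_mono_on hle
          ((hzIxy _ _ (huIcc' i) (huIcc' (i+1))).mul_const _)
          (hzρI _ _ (huIcc' i) (huIcc' (i+1))) fun x hx => ?_
        exact mul_le_mul_of_nonneg_left (hρm hx.1) (hznn x)
      have h2 : (∫ x in u i..u (i+1), z x * ρ (u i))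
          = ((∫ v in (0:ℝ)..u (i+1), z v) - ∫ v in (0:ℝ)..u i, z v) * ρ (u i) := by
        rw [intervalIntegral.integral_mul_const,
          hSdiff (u i) (u (i+1)) (huIcc' i) (huIcc' (i+1))]
      nlinarith [h1, h2]
    have hstepD : (∑ i ∈ Finset.range n,
        ρ (u i) * ((∫ v in (0:ℝ)..u (i+1), z v) - ∫ v in (0:ℝ)..u i, z v))
        ≤ ∫ x in (0:ℝ)..t, z x * ρ x := by
      have h1 : (∑ i ∈ Finset.range n,
          ρ (u i) * ((∫ v in (0:ℝ)..u (i+1), z v) - ∫ v in (0:ℝ)..u i, z v))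
          ≤ ∑ i ∈ Finset.range n, ∫ x in u i..u (i+1), z x * ρ x :=
        Finset.sum_le_sum fun i hi => hpiecez i (Finset.mem_range.1 hi)
      rw [intervalIntegral.sum_integral_adjacent_intervals
        (fun i _ => hzρI _ _ (huIcc' i) (huIcc' (i+1)))] at h1
      rw [hu0] at h1
      have hadd := intervalIntegral.integral_add_adjacent_intervals
        (hzρI 0 (u n) h0mem (huIcc' n)) (hzρI (u n) t (huIcc' n) htmem)
      have h4 : 0 ≤ ∫ x in u n..t, z x * ρ x :=
        intervalIntegral.integral_nonneg (huIcc' n).2 fun x _ =>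
          mul_nonneg (hznn x) (hρ0 x)
      linarith
    linarith
  -- take the limit n → ∞
  by_contra hcon
  push_neg at hcon
  set E : ℝ := (∫ x in (0:ℝ)..t, g x * σ x) - ((∫ x in (0:ℝ)..t, z x * ρ x) + 4 * δ)
    with hE
  have hEpos : 0 < E := by rw [hE]; linarith
  obtain ⟨n, hn⟩ := exists_nat_gt (max 1 (2 * (∫ v in (0:ℝ)..t, g v) / E))
  have hn1 : (1:ℝ) ≤ n := le_of_lt (lt_of_le_of_lt (le_max_left _ _) hn)
  have hnpos : 0 < n := by exact_mod_cast lt_of_lt_of_le zero_lt_one hn1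
  have hmain' := hmain n hnpos
  have hfrac : 2 * ((∫ v in (0:ℝ)..t, g v) / n) < E := by
    have h2 : 2 * (∫ v in (0:ℝ)..t, g v) / E < n :=
      lt_of_le_of_lt (le_max_right _ _) hn
    rw [div_lt_iff₀ hEpos] at h2
    rw [div_eq_mul_inv, ← mul_assoc]
    rw [show (2:ℝ) * (∫ v in (0:ℝ)..t, g v) * (n:ℝ)⁻¹ = (2 * ∫ v in (0:ℝ)..t, g v) / n
      from by ring]
    rw [div_lt_iff₀ (by positivity : (0:ℝ) < (n:ℝ))]
    nlinarith
  rw [hE] at hfrac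
  linarith

private lemma toReal_prob_le_one {Ω : Type*} [MeasurableSpace Ω] (μ : MeasureTheory.Measure Ω)
    [MeasureTheory.IsProbabilityMeasure μ] (s : Set Ω) : (μ s).toReal ≤ 1 := by
  have h := ENNReal.toReal_mono (a := μ s) (b := 1) one_ne_top MeasureTheory.prob_le_one
  simpa using h

/-- Uniqueness of solutions of the time-changed fluid equation on `[0, a]` with
`a = 1/(2(z₀ L + 4λ))`, under a Lipschitz condition on `F₀(x,y) = P(B⁰ ≥ x; D⁰ ≥ y)`
in the second variable. -/
theorem time_changed_fluid_equation_unique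
    {Ω : Type*} [MeasurableSpace Ω] (μ : Measure Ω) [IsProbabilityMeasure μ]
    (B0 D0 B D : Ω → ℝ≥0∞)
    (z₀ l L : ℝ) (hz₀ : 0 < z₀) (hl : 0 < l) (hL : 0 ≤ L)
    (hLip : ∀ x y y' : ℝ, 0 ≤ x → 0 ≤ y → 0 ≤ y' →
      |(μ {ω | ENNReal.ofReal x ≤ B0 ω ∧ ENNReal.ofReal y ≤ D0 ω}).toReal -
        (μ {ω | ENNReal.ofReal x ≤ B0 ω ∧ ENNReal.ofReal y' ≤ D0 ω}).toReal| ≤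
          L * |y - y'|)
    (z g : ℝ → ℝ) (hznn : ∀ t, 0 ≤ z t) (hgnn : ∀ t, 0 ≤ g t)
    (hzc : ContinuousOn z (Set.Icc 0 (1 / (2 * (z₀ * L + 4 * l)))))
    (hgc : ContinuousOn g (Set.Icc 0 (1 / (2 * (z₀ * L + 4 * l)))))
    (heqz : ∀ t ∈ Set.Icc (0 : ℝ) (1 / (2 * (z₀ * L + 4 * l))),
      z t = z₀ * (μ {ω | ENNReal.ofReal t ≤ B0 ω ∧
            ENNReal.ofReal (∫ u in (0 : ℝ)..t, z u) ≤ D0 ω}).toReal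
          + l * ∫ u in (0 : ℝ)..t, z u *
              (μ {ω | ENNReal.ofReal (t - u) ≤ B ω ∧
                ENNReal.ofReal ((∫ v in (0 : ℝ)..t, z v)
                  - ∫ v in (0 : ℝ)..u, z v) ≤ D ω}).toReal)
    (heqg : ∀ t ∈ Set.Icc (0 : ℝ) (1 / (2 * (z₀ * L + 4 * l))),
      g t = z₀ * (μ {ω | ENNReal.ofReal t ≤ B0 ω ∧
            ENNReal.ofReal (∫ u in (0 : ℝ)..t, g u) ≤ D0 ω}).toReal
          + l * ∫ u in (0 : ℝ)..t, g u *
              (μ {ω | ENNReal.ofReal (t - u) ≤ B ω ∧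
                ENNReal.ofReal ((∫ v in (0 : ℝ)..t, g v)
                  - ∫ v in (0 : ℝ)..u, g v) ≤ D ω}).toReal) :
    ∀ t ∈ Set.Icc (0 : ℝ) (1 / (2 * (z₀ * L + 4 * l))), z t = g t := by
  have hden : 0 < z₀ * L + 4 * l := by nlinarith [mul_nonneg hz₀.le hL]
  set a : ℝ := 1 / (2 * (z₀ * L + 4 * l)) with hadef
  have ha : 0 < a := by rw [hadef]; positivity
  have haeq : a * (z₀ * L + 4 * l) = 1/2 := by
    rw [hadef]; field_simp
  obtain ⟨w, hw, hwmax⟩ := isCompact_Icc.exists_isMaxOn (Set.nonempty_Icc.2 ha.le)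
    ((hzc.sub hgc).abs)
  have hmax : ∀ x ∈ Set.Icc (0:ℝ) a, |z x - g x| ≤ |z w - g w| := fun x hx => hwmax hx
  rcases le_or_gt (|z w - g w|) 0 with hε | hε
  · intro x hx
    have h1 := hmax x hx
    have h2 := abs_nonneg (z x - g x)
    have h0 : |z x - g x| = 0 := le_antisymm (h1.trans hε) h2
    exact sub_eq_zero.1 (abs_eq_zero.1 h0)
  · exfalso
    set ε : ℝ := |z w - g w| with hεdef
    set δ : ℝ := ε * a with hδdef
    have hδ : 0 < δ := mul_pos hε ha
    have hw0 : 0 ≤ w := hw.1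
    have hwa : w ≤ a := hw.2
    have huIcc : Set.uIcc (0:ℝ) a = Set.Icc 0 a := Set.uIcc_of_le ha.le
    have hzIa : IntervalIntegrable z volume 0 a :=
      (show ContinuousOn z (Set.uIcc 0 a) by rw [huIcc]; exact hzc).intervalIntegrable
    have hgIa : IntervalIntegrable g volume 0 a :=
      (show ContinuousOn g (Set.uIcc 0 a) by rw [huIcc]; exact hgc).intervalIntegrable
    have hST : ∀ x ∈ Set.Icc (0:ℝ) a,
        |(∫ v in (0:ℝ)..x, z v) - ∫ v in (0:ℝ)..x, g v| ≤ δ := by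
      intro x hx
      have hxmem : x ∈ Set.uIcc (0:ℝ) a := by rw [huIcc]; exact hx
      have h0mem : (0:ℝ) ∈ Set.uIcc (0:ℝ) a := by
        rw [huIcc]; exact Set.left_mem_Icc.2 ha.le
      have hzx : IntervalIntegrable z volume 0 x :=
        hzIa.mono_set (Set.uIcc_subset_uIcc h0mem hxmem)
      have hgx : IntervalIntegrable g volume 0 x :=
        hgIa.mono_set (Set.uIcc_subset_uIcc h0mem hxmem)
      rw [← intervalIntegral.integral_sub hzx hgx]
      calc |∫ v in (0:ℝ)..x, (z v - g v)| ≤ ∫ v in (0:ℝ)..x, |z v - g v| :=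
            intervalIntegral.abs_integral_le_integral_abs hx.1
        _ ≤ ∫ _v in (0:ℝ)..x, ε := by
            refine intervalIntegral.integral_mono_on hx.1 ((hzx.sub hgx).abs)
              intervalIntegrable_const fun y hy => ?_
            exact hmax y ⟨hy.1, hy.2.trans hx.2⟩
        _ = x * ε := by rw [intervalIntegral.integral_const]; simp
        _ ≤ a * ε := mul_le_mul_of_nonneg_right hx.2 (abs_nonneg _)
        _ = δ := by rw [hδdef, hεdef]; ring
    have hIccsub : Set.Icc (0:ℝ) w ⊆ Set.Icc 0 a := Set.Icc_subset_Icc le_rfl hwa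
    have hzc' : ContinuousOn z (Set.Icc 0 w) := hzc.mono hIccsub
    have hgc' : ContinuousOn g (Set.Icc 0 w) := hgc.mono hIccsub
    -- the clamp
    set cl : ℝ → ℝ := fun x => max 0 (min x w) with hcl
    have hclmem : ∀ x, cl x ∈ Set.Icc (0:ℝ) w := fun x =>
      ⟨le_max_left _ _, max_le hw0 (min_le_right _ _)⟩
    have hclid : ∀ x ∈ Set.Icc (0:ℝ) w, cl x = x := by
      intro x hx
      rw [hcl]
      simp only [min_eq_left hx.2, max_eq_right hx.1]
    have hclmono : Monotone cl := fun x y h =>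
      max_le_max le_rfl (min_le_min h le_rfl)
    -- the two kernels
    set P : ℝ → ℝ := fun x => (μ {ω | ENNReal.ofReal (w - cl x) ≤ B ω ∧
        ENNReal.ofReal ((∫ v in (0:ℝ)..w, z v) - ∫ v in (0:ℝ)..(cl x), z v) ≤ D ω}).toReal
        with hP
    set Q : ℝ → ℝ := fun x => (μ {ω | ENNReal.ofReal (w - cl x) ≤ B ω ∧
        ENNReal.ofReal ((∫ v in (0:ℝ)..w, g v) - ∫ v in (0:ℝ)..(cl x), g v) ≤ D ω}).toReal
        with hQ
    have hPmono : Monotone P := by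
      intro x y hxy
      refine ENNReal.toReal_mono (measure_ne_top μ _) (measure_mono ?_)
      rintro ω ⟨h1, h2⟩
      constructor
      · refine le_trans (ENNReal.ofReal_le_ofReal ?_) h1
        have := hclmono hxy; linarith
      · refine le_trans (ENNReal.ofReal_le_ofReal ?_) h2
        have := primitive_mono hw0 hzc' hznn (hclmem x) (hclmem y) (hclmono hxy)
        linarith
    have hQmono : Monotone Q := by
      intro x y hxy
      refine ENNReal.toReal_mono (measure_ne_top μ _) (measure_mono ?_)
      rintro ω ⟨h1, h2⟩
      constructor
      · refine le_trans (ENNReal.ofReal_le_ofReal ?_) h1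
        have := hclmono hxy; linarith
      · refine le_trans (ENNReal.ofReal_le_ofReal ?_) h2
        have := primitive_mono hw0 hgc' hgnn (hclmem x) (hclmem y) (hclmono hxy)
        linarith
    have hP0 : ∀ x, 0 ≤ P x := fun x => ENNReal.toReal_nonneg
    have hQ0 : ∀ x, 0 ≤ Q x := fun x => ENNReal.toReal_nonneg
    have hP1 : ∀ x, P x ≤ 1 := fun x => toReal_prob_le_one μ _
    have hQ1 : ∀ x, Q x ≤ 1 := fun x => toReal_prob_le_one μ _
    -- rewrite the fluid equations at w
    have hw_mem : w ∈ Set.Icc (0:ℝ) a := hw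
    have heqzw := heqz w hw_mem
    have heqgw := heqg w hw_mem
    have hIz : (∫ x in (0:ℝ)..w, z x *
        (μ {ω | ENNReal.ofReal (w - x) ≤ B ω ∧
          ENNReal.ofReal ((∫ v in (0:ℝ)..w, z v) - ∫ v in (0:ℝ)..x, z v) ≤ D ω}).toReal)
        = ∫ x in (0:ℝ)..w, z x * P x := by
      refine intervalIntegral.integral_congr fun x hx => ?_
      rw [Set.uIcc_of_le hw0] at hx
      simp only [hP]
      rw [hclid x hx]
    have hIg : (∫ x in (0:ℝ)..w, g x *
        (μ {ω | ENNReal.ofReal (w - x) ≤ B ω ∧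
          ENNReal.ofReal ((∫ v in (0:ℝ)..w, g v) - ∫ v in (0:ℝ)..x, g v) ≤ D ω}).toReal)
        = ∫ x in (0:ℝ)..w, g x * Q x := by
      refine intervalIntegral.integral_congr fun x hx => ?_
      rw [Set.uIcc_of_le hw0] at hx
      simp only [hQ]
      rw [hclid x hx]
    rw [hIz] at heqzw
    rw [hIg] at heqgw
    -- coupling, both directions
    have hcplA : ∀ v u' : ℝ, 0 ≤ v → v ≤ u' → u' ≤ w →
        (∫ x in (0:ℝ)..v, g x) + 2 * δ ≤ (∫ x in (0:ℝ)..u', g x) → Q v ≤ P u' := by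
      intro v u' hv hvu hu'w hTT
      have hvm : v ∈ Set.Icc (0:ℝ) w := ⟨hv, hvu.trans hu'w⟩
      have hum : u' ∈ Set.Icc (0:ℝ) w := ⟨hv.trans hvu, hu'w⟩
      refine ENNReal.toReal_mono (measure_ne_top μ _) (measure_mono ?_)
      rintro ω ⟨h1, h2⟩
      rw [hclid v hvm] at h1 h2
      have hclu : cl u' = u' := hclid u' hum
      constructor
      · rw [hclu]
        refine le_trans (ENNReal.ofReal_le_ofReal ?_) h1
        linarith
      · rw [hclu]
        refine le_trans (ENNReal.ofReal_le_ofReal ?_) h2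
        have ha1 := abs_le.1 (hST w hw_mem)
        have ha2 := abs_le.1 (hST u' (hIccsub hum))
        linarith
    have hcplB : ∀ v u' : ℝ, 0 ≤ v → v ≤ u' → u' ≤ w →
        (∫ x in (0:ℝ)..v, z x) + 2 * δ ≤ (∫ x in (0:ℝ)..u', z x) → P v ≤ Q u' := by
      intro v u' hv hvu hu'w hTT
      have hvm : v ∈ Set.Icc (0:ℝ) w := ⟨hv, hvu.trans hu'w⟩
      have hum : u' ∈ Set.Icc (0:ℝ) w := ⟨hv.trans hvu, hu'w⟩
      refine ENNReal.toReal_mono (measure_ne_top μ _) (measure_mono ?_)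
      rintro ω ⟨h1, h2⟩
      rw [hclid v hvm] at h1 h2
      have hclu : cl u' = u' := hclid u' hum
      constructor
      · rw [hclu]
        refine le_trans (ENNReal.ofReal_le_ofReal ?_) h1
        linarith
      · rw [hclu]
        refine le_trans (ENNReal.ofReal_le_ofReal ?_) h2
        have ha1 := abs_le.1 (hST w hw_mem)
        have ha2 := abs_le.1 (hST u' (hIccsub hum))
        linarith
    -- apply the key comparison both ways
    have hI1 : (∫ x in (0:ℝ)..w, g x * Q x) ≤ (∫ x in (0:ℝ)..w, z x * P x) + 4 * δ :=
      key_comparison hw0 hδ z g P Q hzc' hgc' hznn hgnn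
        (fun x hx => hST x (hIccsub hx)) hPmono hQmono hP0 hP1 hQ0 hQ1 hcplA
    have hI2 : (∫ x in (0:ℝ)..w, z x * P x) ≤ (∫ x in (0:ℝ)..w, g x * Q x) + 4 * δ :=
      key_comparison hw0 hδ g z Q P hgc' hzc' hgnn hznn
        (fun x hx => by rw [abs_sub_comm]; exact hST x (hIccsub hx))
        hQmono hPmono hQ0 hQ1 hP0 hP1 hcplB
    -- the first (Lipschitz) term
    have hF : |(μ {ω | ENNReal.ofReal w ≤ B0 ω ∧
          ENNReal.ofReal (∫ u in (0:ℝ)..w, z u) ≤ D0 ω}).toReal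
        - (μ {ω | ENNReal.ofReal w ≤ B0 ω ∧
          ENNReal.ofReal (∫ u in (0:ℝ)..w, g u) ≤ D0 ω}).toReal| ≤ L * δ := by
      have hy : 0 ≤ ∫ u in (0:ℝ)..w, z u :=
        intervalIntegral.integral_nonneg hw0 fun x _ => hznn x
      have hy' : 0 ≤ ∫ u in (0:ℝ)..w, g u :=
        intervalIntegral.integral_nonneg hw0 fun x _ => hgnn x
      refine le_trans (hLip w _ _ hw0 hy hy') ?_
      exact mul_le_mul_of_nonneg_left (hST w hw_mem) hL
    -- conclude
    have habs : ε ≤ z₀ * (L * δ) + l * (4 * δ) := by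
      have h1 : z w - g w =
          z₀ * ((μ {ω | ENNReal.ofReal w ≤ B0 ω ∧
              ENNReal.ofReal (∫ u in (0:ℝ)..w, z u) ≤ D0 ω}).toReal
            - (μ {ω | ENNReal.ofReal w ≤ B0 ω ∧
              ENNReal.ofReal (∫ u in (0:ℝ)..w, g u) ≤ D0 ω}).toReal)
          + l * ((∫ x in (0:ℝ)..w, z x * P x) - ∫ x in (0:ℝ)..w, g x * Q x) := by
        rw [heqzw, heqgw]; ring
      calc ε = |z w - g w| := hεdef
        _ ≤ z₀ * |(μ {ω | ENNReal.ofReal w ≤ B0 ω ∧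
              ENNReal.ofReal (∫ u in (0:ℝ)..w, z u) ≤ D0 ω}).toReal
            - (μ {ω | ENNReal.ofReal w ≤ B0 ω ∧
              ENNReal.ofReal (∫ u in (0:ℝ)..w, g u) ≤ D0 ω}).toReal|
            + l * |(∫ x in (0:ℝ)..w, z x * P x) - ∫ x in (0:ℝ)..w, g x * Q x| := by
            rw [h1]
            refine le_trans (abs_add_le _ _) ?_
            rw [abs_mul, abs_mul, abs_of_nonneg hz₀.le, abs_of_nonneg hl.le]
        _ ≤ z₀ * (L * δ) + l * (4 * δ) := by
            refine add_le_add (mul_le_mul_of_nonneg_left hF hz₀.le)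
              (mul_le_mul_of_nonneg_left ?_ hl.le)
            exact abs_le.2 ⟨by linarith, by linarith⟩
    have hhalf : z₀ * (L * δ) + l * (4 * δ) = ε / 2 := by
      rw [hδdef]
      nlinarith [haeq]
    linarith
end
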